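/- arXiv:quant-ph/0406215 — 3 statements merged into one kernel-verified Lean document; each statement's English description precedes it below -/
import Mathlib

section
/- For positive semidefinite matrices A and B (not necessarily of unit trace) with ker B ⊆ ker A, the extended relative entropy satisfies the Bogoliubov inequality: Tr[A(log A − log B)] ≥ Tr[A](log Tr[A] − log Tr[B]). -/
open Matrix Kronecker
open scoped BigOperators ComplexOrder

variable {n m : Type*}

/-- Functional-calculus logarithm of a Hermitian matrix, restricted to its support
(zero eigenvalues are sent to zero). Returns 0 for non-Hermitian matrices. -/
noncomputable def matLog [Fintype n] [DecidableEq n] (A : Matrix n n ℂ) : Matrix n n ℂ :=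
  if h : A.IsHermitian then
    (h.eigenvectorUnitary : Matrix n n ℂ) *
      Matrix.diagonal (fun i => (Real.log (h.eigenvalues i) : ℂ)) *
      (star (h.eigenvectorUnitary : Matrix n n ℂ))
  else 0

/-- Extended Umegaki relative entropy `S(A,B) = Tr[A(log A − log B)]` (real part). -/
noncomputable def relEnt [Fintype n] [DecidableEq n] (A B : Matrix n n ℂ) : ℝ :=
  ((A * (matLog A - matLog B)).trace).re

/-- von Neumann entropy `S(ρ) = −Tr[ρ log ρ]`. -/
noncomputable def vnEnt [Fintype n] [DecidableEq n] (ρ : Matrix n n ℂ) : ℝ :=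
  -((ρ * matLog ρ).trace).re

/-- A density matrix: positive semidefinite with unit trace. -/
def IsDensity [Fintype n] [DecidableEq n] (ρ : Matrix n n ℂ) : Prop :=
  ρ.PosSemidef ∧ ρ.trace = 1

/-- Completely positive trace-preserving map, via a Kraus representation. -/
def IsCPTP [Fintype n] [DecidableEq n] [Fintype m] [DecidableEq m]
    (Λ : Matrix n n ℂ → Matrix m m ℂ) : Prop :=
  ∃ (ι : Type) (_ : Fintype ι) (K : ι → Matrix m n ℂ),
    (∀ A, Λ A = ∑ i, K i * A * (K i)ᴴ) ∧ (∑ i, (K i)ᴴ * K i = 1)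

/-- An orthogonal resolution of the identity (projection valued measure). -/
def OrthRes [Fintype n] [DecidableEq n] {ι : Type*} [Fintype ι]
    (E : ι → Matrix n n ℂ) : Prop :=
  (∀ i, (E i).IsHermitian) ∧ (∀ i, E i * E i = E i) ∧
  (∀ i j, i ≠ j → E i * E j = 0) ∧ (∑ i, E i = 1)

/-- A Schatten decomposition of ρ: rank-one orthogonal spectral projections. -/
def SchattenDecomp [Fintype n] [DecidableEq n]
    (ρ : Matrix n n ℂ) (lam : n → ℝ) (E : n → Matrix n n ℂ) : Prop :=
  (∀ k, 0 ≤ lam k) ∧ OrthRes E ∧ (∀ k, (E k).trace = 1) ∧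
  ρ = ∑ k, (lam k : ℂ) • E k

/-- Ohya's quantum mutual entropy `I(ρ;Λ*)`. -/
noncomputable def mutEnt [Fintype n] [DecidableEq n] [Fintype m] [DecidableEq m]
    (ρ : Matrix n n ℂ) (Λ : Matrix n n ℂ → Matrix m m ℂ) : ℝ :=
  sSup {x : ℝ | ∃ lam E, SchattenDecomp ρ lam E ∧
    x = ∑ k, lam k * relEnt (Λ (E k)) (Λ ρ)}

private lemma log_sub_log_ge {x y T S : ℝ} (hx : 0 < x) (hy : 0 < y) (hT : 0 < T) (hS : 0 < S) :
    1 - T * y / (S * x) ≤ Real.log x - Real.log T - (Real.log y - Real.log S) := by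
  have h : Real.log (T * y / (S * x)) ≤ T * y / (S * x) - 1 :=
    Real.log_le_sub_one_of_pos (by positivity)
  have h2 : Real.log (T * y / (S * x)) = Real.log T + Real.log y - (Real.log S + Real.log x) := by
    rw [Real.log_div (by positivity) (by positivity), Real.log_mul hT.ne' hy.ne',
      Real.log_mul hS.ne' hx.ne']
  linarith

private lemma key_ineq {n : Type*} [Fintype n] (a b : n → ℝ) (p : n → n → ℝ)
    (ha : ∀ i, 0 ≤ a i) (hb : ∀ j, 0 ≤ b j) (hp : ∀ i j, 0 ≤ p i j)
    (hrow : ∀ i, ∑ j, p i j = 1) (hcol : ∀ j, ∑ i, p i j = 1)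
    (hz : ∀ i j, a i ≠ 0 → b j = 0 → p i j = 0)
    (hTA : 0 < ∑ i, a i) (hTB : 0 < ∑ j, b j) :
    (∑ i, a i) * (Real.log (∑ i, a i) - Real.log (∑ j, b j)) ≤
      ∑ i, a i * Real.log (a i) - ∑ i, ∑ j, a i * Real.log (b j) * p i j := by
  set T := ∑ i, a i with hT
  set S := ∑ j, b j with hS
  have hpt : ∀ i j, 0 ≤ a i * p i j * (Real.log (a i) - Real.log T - (Real.log (b j) - Real.log S))
      - (a i * p i j - T / S * (p i j * b j)) := by
    intro i j
    rcases (ha i).eq_or_lt with h0 | hai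
    · have : 0 ≤ T / S * (p i j * b j) :=
        mul_nonneg (div_nonneg hTA.le hTB.le) (mul_nonneg (hp i j) (hb j))
      rw [← h0]
      simpa using this
    rcases (hb j).eq_or_lt with h0 | hbj
    · have hp0 : p i j = 0 := hz i j hai.ne' h0.symm
      simp [hp0]
    · have h1 := log_sub_log_ge hai hbj hTA hTB
      have h2 : 0 ≤ a i * p i j := mul_nonneg (ha i) (hp i j)
      have h3 := mul_le_mul_of_nonneg_left h1 h2
      have h4 : a i * p i j * (1 - T * b j / (S * a i)) =
          a i * p i j - T / S * (p i j * b j) := by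
        field_simp
      linarith [h4 ▸ h3]
  have main : 0 ≤ ∑ i, ∑ j,
      (a i * p i j * (Real.log (a i) - Real.log T - (Real.log (b j) - Real.log S))
        - (a i * p i j - T / S * (p i j * b j))) :=
    Finset.sum_nonneg fun i _ => Finset.sum_nonneg fun j _ => hpt i j
  have erow1 : ∑ i, ∑ j, a i * p i j = T := by
    refine Eq.trans (Finset.sum_congr rfl fun i _ => ?_) hT.symm
    rw [← Finset.mul_sum, hrow i, mul_one]
  have erow : ∀ (c : n → ℝ), ∑ i, ∑ j, a i * p i j * c i = ∑ i, a i * c i := by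
    intro c
    refine Finset.sum_congr rfl fun i _ => ?_
    calc ∑ j, a i * p i j * c i = (a i * c i) * ∑ j, p i j := by
          rw [Finset.mul_sum]; exact Finset.sum_congr rfl fun j _ => by ring
    _ = a i * c i := by rw [hrow i, mul_one]
  have ecol : ∑ i, ∑ j, T / S * (p i j * b j) = T := by
    rw [Finset.sum_comm]
    have : ∀ j, ∑ i, T / S * (p i j * b j) = T / S * b j := by
      intro j
      calc ∑ i, T / S * (p i j * b j) = (T / S * b j) * ∑ i, p i j := by
            rw [Finset.mul_sum]; exact Finset.sum_congr rfl fun i _ => by ring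
      _ = T / S * b j := by rw [hcol j, mul_one]
    simp_rw [this, ← Finset.mul_sum, ← hS]
    field_simp
  have elogb : ∑ i, ∑ j, a i * p i j * Real.log (b j) = ∑ i, ∑ j, a i * Real.log (b j) * p i j := by
    exact Finset.sum_congr rfl fun i _ => Finset.sum_congr rfl fun j _ => by ring
  have expand : ∑ i, ∑ j,
      (a i * p i j * (Real.log (a i) - Real.log T - (Real.log (b j) - Real.log S))
        - (a i * p i j - T / S * (p i j * b j)))
      = (∑ i, a i * Real.log (a i)) - T * Real.log T
        - (∑ i, ∑ j, a i * Real.log (b j) * p i j) + T * Real.log S - T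
        + (∑ i, ∑ j, T / S * (p i j * b j)) := by
    have e1 : ∀ i j, a i * p i j * (Real.log (a i) - Real.log T - (Real.log (b j) - Real.log S))
        - (a i * p i j - T / S * (p i j * b j))
        = a i * p i j * Real.log (a i) - a i * p i j * Real.log T
          - a i * p i j * Real.log (b j) + a i * p i j * Real.log S
          - a i * p i j + T / S * (p i j * b j) := fun i j => by ring
    simp_rw [e1]
    simp only [Finset.sum_add_distrib, Finset.sum_sub_distrib]
    rw [erow (fun i => Real.log (a i)), erow (fun _ => Real.log T), erow (fun _ => Real.log S),
      erow1, elogb, ← Finset.sum_mul, ← Finset.sum_mul, ← hT]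
  rw [expand, ecol] at main
  linarith

private lemma trace_diag_conj [Fintype n] [DecidableEq n] (d e : n → ℂ) (M : Matrix n n ℂ) :
    (Matrix.diagonal d * M * Matrix.diagonal e * star M).trace
      = ∑ i, ∑ j, d i * e j * (Complex.normSq (M i j) : ℂ) := by
  rw [Matrix.trace]
  refine Finset.sum_congr rfl fun i _ => ?_
  rw [Matrix.diag_apply, Matrix.mul_apply]
  refine Finset.sum_congr rfl fun j _ => ?_
  rw [Matrix.mul_diagonal, Matrix.diagonal_mul, Matrix.star_apply, RCLike.star_def,
    ← Complex.mul_conj]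
  ring

private lemma trace_conj_pair [Fintype n] [DecidableEq n] (U V : Matrix n n ℂ) (d e : n → ℂ) :
    (U * Matrix.diagonal d * star U * (V * Matrix.diagonal e * star V)).trace
      = ∑ i, ∑ j, d i * e j * (Complex.normSq ((star U * V) i j) : ℂ) := by
  rw [show U * Matrix.diagonal d * star U * (V * Matrix.diagonal e * star V)
      = U * (Matrix.diagonal d * star U * (V * (Matrix.diagonal e * star V))) from by
      simp only [Matrix.mul_assoc],
    Matrix.trace_mul_comm,
    show Matrix.diagonal d * star U * (V * (Matrix.diagonal e * star V)) * U
      = Matrix.diagonal d * (star U * V) * Matrix.diagonal e * star (star U * V) from by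
      simp only [Matrix.star_mul, star_star, Matrix.mul_assoc],
    trace_diag_conj]

/-- Bogoliubov inequality for the extended relative entropy. -/
theorem stmt0_bogoliubov [Fintype n] [DecidableEq n]
    (A B : Matrix n n ℂ) (hA : A.PosSemidef) (hB : B.PosSemidef)
    (hA0 : A ≠ 0) (hB0 : B ≠ 0)
    (hker : ∀ v : n → ℂ, B.mulVec v = 0 → A.mulVec v = 0) :
    relEnt A B ≥ A.trace.re * (Real.log A.trace.re - Real.log B.trace.re) := by
  classical
  have hAh : A.IsHermitian := hA.1
  have hBh : B.IsHermitian := hB.1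
  set a : n → ℝ := hAh.eigenvalues with ha_def
  set b : n → ℝ := hBh.eigenvalues with hb_def
  set UA : Matrix n n ℂ := (hAh.eigenvectorUnitary : Matrix n n ℂ) with hUA_def
  set UB : Matrix n n ℂ := (hBh.eigenvectorUnitary : Matrix n n ℂ) with hUB_def
  have hUAl : star UA * UA = 1 := Matrix.mem_unitaryGroup_iff'.mp hAh.eigenvectorUnitary.2
  have hUAr : UA * star UA = 1 := Matrix.mem_unitaryGroup_iff.mp hAh.eigenvectorUnitary.2
  have hUBl : star UB * UB = 1 := Matrix.mem_unitaryGroup_iff'.mp hBh.eigenvectorUnitary.2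
  have hUBr : UB * star UB = 1 := Matrix.mem_unitaryGroup_iff.mp hBh.eigenvectorUnitary.2
  set M : Matrix n n ℂ := star UA * UB with hM_def
  set p : n → n → ℝ := fun i j => Complex.normSq (M i j) with hp_def
  have specA : A = UA * Matrix.diagonal (fun i => (a i : ℂ)) * star UA := by
    exact hAh.spectral_theorem
  have specB : B = UB * Matrix.diagonal (fun i => (b i : ℂ)) * star UB := by
    exact hBh.spectral_theorem
  have logA : matLog A = UA * Matrix.diagonal (fun i => (Real.log (a i) : ℂ)) * star UA := by
    unfold matLog
    rw [dif_pos hAh]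
  have logB : matLog B = UB * Matrix.diagonal (fun i => (Real.log (b i) : ℂ)) * star UB := by
    unfold matLog
    rw [dif_pos hBh]
  have hMr : M * star M = 1 := by
    rw [hM_def, Matrix.star_mul, star_star,
      show star UA * UB * (star UB * UA) = star UA * (UB * star UB) * UA from by
        simp only [Matrix.mul_assoc], hUBr, Matrix.mul_one, hUAl]
  have hMl : star M * M = 1 := by
    rw [hM_def, Matrix.star_mul, star_star,
      show star UB * UA * (star UA * UB) = star UB * (UA * star UA) * UB from by
        simp only [Matrix.mul_assoc], hUAr, Matrix.mul_one, hUBl]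
  have hae : ∀ i, 0 ≤ a i := fun i => hA.eigenvalues_nonneg i
  have hbe : ∀ j, 0 ≤ b j := fun j => hB.eigenvalues_nonneg j
  have hpnn : ∀ i j, 0 ≤ p i j := fun i j => Complex.normSq_nonneg _
  have trAre : A.trace.re = ∑ i, a i := by
    conv_lhs => rw [specA]
    rw [Matrix.trace_mul_comm, ← Matrix.mul_assoc, hUAl, Matrix.one_mul, Matrix.trace_diagonal]
    rw [Complex.re_sum]
    simp
  have trBre : B.trace.re = ∑ j, b j := by
    conv_lhs => rw [specB]
    rw [Matrix.trace_mul_comm, ← Matrix.mul_assoc, hUBl, Matrix.one_mul, Matrix.trace_diagonal]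
    rw [Complex.re_sum]
    simp
  have hTA : 0 < ∑ i, a i := by
    rcases (Finset.sum_nonneg fun i _ => hae i).lt_or_eq with h | h
    · exact h
    · exfalso
      apply hA0
      have hall : ∀ i, a i = 0 := fun i =>
        (Finset.sum_eq_zero_iff_of_nonneg (fun i _ => hae i)).mp h.symm i (Finset.mem_univ i)
      have hd : Matrix.diagonal (fun i => (a i : ℂ)) = 0 := by
        ext i j
        by_cases hij : i = j <;> simp [Matrix.diagonal_apply, hij, hall]
      rw [specA, hd, Matrix.mul_zero, Matrix.zero_mul]
  have hTB : 0 < ∑ j, b j := by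
    rcases (Finset.sum_nonneg fun j _ => hbe j).lt_or_eq with h | h
    · exact h
    · exfalso
      apply hB0
      have hall : ∀ j, b j = 0 := fun j =>
        (Finset.sum_eq_zero_iff_of_nonneg (fun j _ => hbe j)).mp h.symm j (Finset.mem_univ j)
      have hd : Matrix.diagonal (fun j => (b j : ℂ)) = 0 := by
        ext i j
        by_cases hij : i = j <;> simp [Matrix.diagonal_apply, hij, hall]
      rw [specB, hd, Matrix.mul_zero, Matrix.zero_mul]
  -- row and column sums of p
  have hrow : ∀ i, ∑ j, p i j = 1 := by
    intro i
    have h := congrFun (congrFun hMr i) i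
    rw [Matrix.mul_apply] at h
    have h2 : ∀ j, M i j * (star M) j i = ((p i j : ℝ) : ℂ) := by
      intro j
      rw [Matrix.star_apply, RCLike.star_def, Complex.mul_conj]
    rw [Finset.sum_congr rfl (fun j _ => h2 j), Matrix.one_apply_eq] at h
    have h3 := congrArg Complex.re h
    rw [Complex.re_sum] at h3
    simpa using h3
  have hcol : ∀ j, ∑ i, p i j = 1 := by
    intro j
    have h := congrFun (congrFun hMl j) j
    rw [Matrix.mul_apply] at h
    have h2 : ∀ i, (star M) j i * M i j = ((p i j : ℝ) : ℂ) := by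
      intro i
      rw [Matrix.star_apply, RCLike.star_def, mul_comm, Complex.mul_conj]
    rw [Finset.sum_congr rfl (fun i _ => h2 i), Matrix.one_apply_eq] at h
    have h3 := congrArg Complex.re h
    rw [Complex.re_sum] at h3
    simpa using h3
  -- kernel condition
  have hkerp : ∀ i j, a i ≠ 0 → b j = 0 → p i j = 0 := by
    intro i j hai hbj
    have hBU : B * UB = UB * Matrix.diagonal (fun k => (b k : ℂ)) := by
      conv_lhs => rw [specB]
      rw [Matrix.mul_assoc, hUBl, Matrix.mul_one]
    have hBv : B.mulVec (fun k => UB k j) = 0 := by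
      funext i'
      have h0 : (B * UB) i' j = 0 := by
        rw [hBU, Matrix.mul_diagonal, hbj]
        simp
      rw [Matrix.mul_apply] at h0
      simpa [Matrix.mulVec, dotProduct] using h0
    have hAv := hker _ hBv
    have hAUB : ∀ i', (A * UB) i' j = 0 := by
      intro i'
      have h0 := congrFun hAv i'
      rw [Matrix.mul_apply]
      simpa [Matrix.mulVec, dotProduct] using h0
    have h1 : Matrix.diagonal (fun k => (a k : ℂ)) * star UA = star UA * A := by
      conv_rhs => rw [specA]
      rw [← Matrix.mul_assoc, ← Matrix.mul_assoc, hUAl, Matrix.one_mul]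
    have hDAM : Matrix.diagonal (fun k => (a k : ℂ)) * M = star UA * (A * UB) := by
      rw [hM_def, ← Matrix.mul_assoc, h1, Matrix.mul_assoc]
    have hzero : (a i : ℂ) * M i j = 0 := by
      have hent := congrFun (congrFun hDAM i) j
      rw [Matrix.diagonal_mul] at hent
      rw [hent, Matrix.mul_apply]
      exact Finset.sum_eq_zero fun k _ => by rw [hAUB k, mul_zero]
    have hM0 : M i j = 0 := by
      rcases mul_eq_zero.mp hzero with h | h
      · exact absurd (Complex.ofReal_eq_zero.mp h) hai
      · exact h
    simp [hp_def, hM0]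
  -- trace sums
  have sumAAc : (A * matLog A).trace = ∑ i, ∑ j, (a i : ℂ) * (Real.log (a j) : ℂ)
      * ((Complex.normSq ((1 : Matrix n n ℂ) i j) : ℝ) : ℂ) := by
    conv_lhs => rw [logA, specA]
    rw [trace_conj_pair, hUAl]
  have sumAAre : (A * matLog A).trace.re = ∑ i, a i * Real.log (a i) := by
    rw [sumAAc, Complex.re_sum]
    refine Finset.sum_congr rfl fun i _ => ?_
    rw [Complex.re_sum]
    have h2 : ∀ j, ((a i : ℂ) * (Real.log (a j) : ℂ)
        * ((Complex.normSq ((1 : Matrix n n ℂ) i j) : ℝ) : ℂ)).re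
        = if j = i then a i * Real.log (a i) else 0 := by
      intro j
      by_cases hij : i = j
      · subst hij
        simp [Matrix.one_apply_eq, ← Complex.ofReal_mul]
      · simp [Matrix.one_apply_ne hij, Ne.symm hij]
    rw [Finset.sum_congr rfl (fun j _ => h2 j), Finset.sum_ite_eq']
    simp
  have sumABre : (A * matLog B).trace.re = ∑ i, ∑ j, a i * Real.log (b j) * p i j := by
    have hc : (A * matLog B).trace = ∑ i, ∑ j, (a i : ℂ) * (Real.log (b j) : ℂ)
        * ((Complex.normSq (M i j) : ℝ) : ℂ) := by
      conv_lhs => rw [logB, specA]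
      rw [trace_conj_pair]
    rw [hc, Complex.re_sum]
    refine Finset.sum_congr rfl fun i _ => ?_
    rw [Complex.re_sum]
    refine Finset.sum_congr rfl fun j _ => ?_
    rw [← Complex.ofReal_mul, ← Complex.ofReal_mul, Complex.ofReal_re]
  -- conclude
  have key := key_ineq a b p hae hbe hpnn hrow hcol hkerp hTA hTB
  rw [ge_iff_le, relEnt, Matrix.mul_sub, Matrix.trace_sub, Complex.sub_re,
    sumAAre, sumABre, trAre, trBre]
  exact key
end

section
/- For a Schatten decomposition ρ = ∑_k λ_k E_k and a channel Λ*, the relative entropy of the compound state with respect to the product state equals the Holevo-type sum: S(σ_E, ρ ⊗ Λ*ρ) = ∑_k λ_k S(Λ*E_k, Λ*ρ), where σ_E = ∑_k λ_k E_k ⊗ Λ*(E_k). -/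
open Matrix Kronecker
open scoped BigOperators ComplexOrder

variable {n m : Type*}

section Aux2
variable {N : Type*} [Fintype N] [DecidableEq N] {ι : Type*} [Fintype ι]

lemma diag_indicator_sum (d : N → ℂ) :
    Matrix.diagonal d = ∑ i, d i • Matrix.diagonal (fun j => if j = i then (1:ℂ) else 0) := by
  ext a b
  by_cases h : a = b <;>
    simp [Matrix.diagonal_apply, Matrix.sum_apply, h, Finset.sum_ite_eq']

lemma conj_diag_sum (V : Matrix N N ℂ) (d : N → ℂ) :
    V * Matrix.diagonal d * star V
      = ∑ i, d i • (V * Matrix.diagonal (fun j => if j = i then (1:ℂ) else 0) * star V) := by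
  conv_lhs => rw [diag_indicator_sum d]
  simp [Matrix.mul_sum, Matrix.sum_mul, Matrix.mul_smul, Matrix.smul_mul]

lemma spectral_orthres {A : Matrix N N ℂ} (hA : A.IsHermitian) :
    ∃ P : N → Matrix N N ℂ, OrthRes P ∧ (∀ i, (P i).trace = 1) ∧
      A = ∑ i, (hA.eigenvalues i : ℂ) • P i ∧
      matLog A = ∑ i, ((Real.log (hA.eigenvalues i) : ℝ) : ℂ) • P i := by
  set V : Matrix N N ℂ := (hA.eigenvectorUnitary : Matrix N N ℂ) with hVdef
  have hV1 : star V * V = 1 := hA.eigenvectorUnitary.2.1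
  have hV2 : V * star V = 1 := hA.eigenvectorUnitary.2.2
  set D : N → Matrix N N ℂ := fun i => Matrix.diagonal (fun j => if j = i then (1:ℂ) else 0)
    with hDdef
  have hDherm : ∀ i, (D i)ᴴ = D i := by
    intro i
    rw [hDdef, Matrix.diagonal_conjTranspose]
    have h0 : (star fun j => if j = i then (1:ℂ) else 0) = fun j => if j = i then (1:ℂ) else 0 := by
      funext k; by_cases hk : k = i <;> simp [hk, Pi.star_apply]
    rw [h0]
  have hDmul : ∀ i j, D i * D j = if i = j then D i else 0 := by
    intro i j
    rw [hDdef, Matrix.diagonal_mul_diagonal]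
    split_ifs with h
    · subst h
      have h0 : (fun k => (if k = i then (1:ℂ) else 0) * (if k = i then 1 else 0))
          = fun k => if k = i then (1:ℂ) else 0 := by
        funext k; by_cases hk : k = i <;> simp [hk]
      rw [h0]
    · have h0 : (fun k => (if k = i then (1:ℂ) else 0) * (if k = j then 1 else 0))
          = fun _ => (0 : ℂ) := by
        funext k
        by_cases hk : k = i <;> by_cases hk' : k = j <;> simp [hk, hk']
        all_goals first | exact h | exact mt Eq.symm h
      rw [h0, Matrix.diagonal_zero]
  have key : ∀ X Y : Matrix N N ℂ, (V * X * star V) * (V * Y * star V) = V * (X * Y) * star V := by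
    intro X Y
    have h1 : star V * (V * Y * star V) = Y * star V := by
      rw [← mul_assoc, ← mul_assoc, hV1, one_mul]
    calc V * X * star V * (V * Y * star V) = V * X * (star V * (V * Y * star V)) := by
          rw [mul_assoc]
      _ = V * X * (Y * star V) := by rw [h1]
      _ = V * (X * Y) * star V := by rw [← mul_assoc, mul_assoc V X Y]
  refine ⟨fun i => V * D i * star V, ⟨?_, ?_, ?_, ?_⟩, ?_, ?_, ?_⟩
  · intro i
    show (V * D i * star V)ᴴ = V * D i * star V
    rw [Matrix.conjTranspose_mul, Matrix.conjTranspose_mul, hDherm,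
      Matrix.star_eq_conjTranspose, Matrix.conjTranspose_conjTranspose, ← Matrix.star_eq_conjTranspose, mul_assoc]
  · intro i
    rw [key, hDmul, if_pos rfl]
  · intro i j hij
    rw [key, hDmul, if_neg hij, Matrix.mul_zero, Matrix.zero_mul]
  · have h2 : ∑ i, V * D i * star V = V * (∑ i, D i) * star V := by
      simp [Matrix.mul_sum, Matrix.sum_mul]
    rw [h2]
    have hsum : (∑ i, D i) = 1 := by
      ext a b
      by_cases h : a = b <;> simp [hDdef, Matrix.sum_apply, Matrix.diagonal_apply, h,
        Matrix.one_apply, Finset.sum_ite_eq']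
    rw [hsum, mul_one, hV2]
  · intro i
    rw [Matrix.trace_mul_cycle, hV1, one_mul]
    simp [hDdef, Matrix.trace_diagonal]
  · conv_lhs => rw [hA.spectral_theorem]
    rw [Unitary.conjStarAlgAut_apply, conj_diag_sum]
    rfl
  · rw [matLog, dif_pos hA]
    rw [conj_diag_sum]
end Aux2

section Aux3
variable {N : Type*} [Fintype N] [DecidableEq N] {ι : Type*} [Fintype ι]

lemma orthres_pow (P : ι → Matrix N N ℂ) (hP : OrthRes P) (μ : ι → ℂ) (k : ℕ) :
    (∑ i, μ i • P i) ^ k = ∑ i, μ i ^ k • P i := by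
  obtain ⟨-, hidem, horth, hsum⟩ := hP
  induction k with
  | zero => simpa using hsum.symm
  | succ k ih =>
      rw [pow_succ, ih, Finset.sum_mul]
      refine Finset.sum_congr rfl fun i _ => ?_
      rw [Finset.mul_sum]
      rw [Finset.sum_eq_single i]
      · rw [smul_mul_smul_comm, hidem i, ← pow_succ]
      · intro j _ hj
        rw [smul_mul_smul_comm, horth i j (fun h => hj h.symm), smul_zero]
      · intro h; exact absurd (Finset.mem_univ i) h

lemma orthres_aeval (P : ι → Matrix N N ℂ) (hP : OrthRes P) (μ : ι → ℝ) (p : Polynomial ℝ) :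
    Polynomial.aeval (∑ i, ((μ i : ℂ)) • P i) p = ∑ i, ((p.eval (μ i) : ℝ) : ℂ) • P i := by
  rw [Polynomial.aeval_eq_sum_range]
  have h1 : ∀ k : ℕ, (∑ i, ((μ i : ℂ)) • P i) ^ k = ∑ i, ((μ i : ℂ)) ^ k • P i :=
    orthres_pow P hP _
  simp_rw [h1, Finset.smul_sum]
  rw [Finset.sum_comm]
  refine Finset.sum_congr rfl fun i _ => ?_
  simp_rw [← smul_assoc, ← Finset.sum_smul]
  congr 1
  rw [Polynomial.eval_eq_sum_range]
  push_cast
  simp [Complex.real_smul, smul_eq_mul]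

lemma orthres_sum_isHermitian (P : ι → Matrix N N ℂ) (hP : OrthRes P) (μ : ι → ℝ) :
    (∑ i, ((μ i : ℂ)) • P i).IsHermitian := by
  show _ᴴ = _
  rw [Matrix.conjTranspose_sum]
  refine Finset.sum_congr rfl fun i _ => ?_
  rw [Matrix.conjTranspose_smul, (hP.1 i)]
  congr 1
  simp

lemma matLog_orthres (P : ι → Matrix N N ℂ) (hP : OrthRes P) (μ : ι → ℝ) :
    matLog (∑ i, ((μ i : ℂ)) • P i) = ∑ i, ((Real.log (μ i) : ℝ) : ℂ) • P i := by
  have hA : (∑ i, ((μ i : ℂ)) • P i).IsHermitian := orthres_sum_isHermitian P hP μ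
  obtain ⟨Q, hQ, -, hAeq, hlog⟩ := spectral_orthres hA
  set s : Finset ℝ := Finset.univ.image μ ∪ Finset.univ.image hA.eigenvalues with hs
  set p : Polynomial ℝ := Lagrange.interpolate s id Real.log with hpdef
  have hps : ∀ x ∈ s, p.eval x = Real.log x := by
    intro x hx
    have := Lagrange.eval_interpolate_at_node (s := s) (v := id) Real.log
      (Set.injOn_id _) hx
    exact this
  have h2 : Polynomial.aeval (∑ i, ((μ i : ℂ)) • P i) p
      = ∑ i, ((p.eval (μ i) : ℝ) : ℂ) • P i := orthres_aeval P hP μ p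
  have h3 : Polynomial.aeval (∑ i, ((μ i : ℂ)) • P i) p
      = ∑ i, ((p.eval (hA.eigenvalues i) : ℝ) : ℂ) • Q i := by
    conv_lhs => rw [hAeq]
    exact orthres_aeval Q hQ hA.eigenvalues p
  have h4 : ∀ i, p.eval (μ i) = Real.log (μ i) := fun i =>
    hps _ (Finset.mem_union_left _ (Finset.mem_image_of_mem μ (Finset.mem_univ i)))
  have h5 : ∀ i, p.eval (hA.eigenvalues i) = Real.log (hA.eigenvalues i) := fun i =>
    hps _ (Finset.mem_union_right _ (Finset.mem_image_of_mem _ (Finset.mem_univ i)))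
  rw [hlog]
  simp_rw [← h4, ← h5, ← h2, h3]
end Aux3

section Aux4
variable {N M : Type*} [Fintype N] [DecidableEq N] [Fintype M] [DecidableEq M]
  {ι κ : Type*} [Fintype ι] [Fintype κ]

lemma kron_conjTranspose (A : Matrix N N ℂ) (B : Matrix M M ℂ) :
    (A ⊗ₖ B)ᴴ = Aᴴ ⊗ₖ Bᴴ := by
  ext ⟨a, b⟩ ⟨c, d⟩
  simp [Matrix.conjTranspose_apply, Matrix.kroneckerMap_apply, mul_comm]

lemma sum_kron (A : ι → Matrix N N ℂ) (B : Matrix M M ℂ) :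
    (∑ i, A i) ⊗ₖ B = ∑ i, A i ⊗ₖ B := by
  ext ⟨a, b⟩ ⟨c, d⟩
  simp [Matrix.sum_apply, Matrix.kroneckerMap_apply, Finset.sum_mul]

lemma kron_sum (A : Matrix N N ℂ) (B : ι → Matrix M M ℂ) :
    A ⊗ₖ (∑ i, B i) = ∑ i, A ⊗ₖ B i := by
  ext ⟨a, b⟩ ⟨c, d⟩
  simp [Matrix.sum_apply, Matrix.kroneckerMap_apply, Finset.mul_sum]

lemma orthres_kron (P : ι → Matrix N N ℂ) (Q : ι → κ → Matrix M M ℂ)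
    (hP : OrthRes P) (hQ : ∀ i, OrthRes (Q i)) :
    OrthRes (fun ik : ι × κ => P ik.1 ⊗ₖ Q ik.1 ik.2) := by
  obtain ⟨hPh, hPi, hPo, hPs⟩ := hP
  refine ⟨?_, ?_, ?_, ?_⟩
  · rintro ⟨i, k⟩
    show _ᴴ = _
    rw [kron_conjTranspose, hPh i, (hQ i).1 k]
  · rintro ⟨i, k⟩
    show P i ⊗ₖ Q i k * (P i ⊗ₖ Q i k) = P i ⊗ₖ Q i k
    rw [← Matrix.mul_kronecker_mul, hPi i, (hQ i).2.1 k]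
  · rintro ⟨i, k⟩ ⟨j, l⟩ hne
    show P i ⊗ₖ Q i k * (P j ⊗ₖ Q j l) = 0
    rw [← Matrix.mul_kronecker_mul]
    by_cases hij : i = j
    · subst hij
      have hkl : k ≠ l := fun h => hne (by rw [h])
      rw [(hQ i).2.2.1 k l hkl, Matrix.kronecker_zero]
    · rw [hPo i j hij, Matrix.zero_kronecker]
  · rw [Fintype.sum_prod_type]
    have h1 : ∀ i, ∑ k, P i ⊗ₖ Q i k = P i ⊗ₖ (1 : Matrix M M ℂ) := by
      intro i; rw [← kron_sum, (hQ i).2.2.2]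
    simp_rw [h1]
    rw [← sum_kron, hPs, Matrix.one_kronecker_one]

lemma trace_sum_smul_mul (P : ι → Matrix N N ℂ) (W : κ → Matrix N N ℂ) (α : ι → ℂ) (β : κ → ℂ) :
    ((∑ i, α i • P i) * (∑ j, β j • W j)).trace
      = ∑ i, ∑ j, α i * β j * (P i * W j).trace := by
  rw [Finset.sum_mul]
  simp_rw [Finset.mul_sum, Matrix.trace_sum, smul_mul_smul_comm, Matrix.trace_smul, smul_eq_mul]

lemma trace_orthres_pair (P : ι → Matrix N N ℂ) (hP : OrthRes P)
    (hPtr : ∀ i, (P i).trace = 1) (α β : ι → ℂ) :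
    ((∑ i, α i • P i) * (∑ j, β j • P j)).trace = ∑ i, α i * β i := by
  rw [trace_sum_smul_mul]
  refine Finset.sum_congr rfl fun i _ => ?_
  rw [Finset.sum_eq_single i]
  · rw [hP.2.1 i, hPtr i, mul_one]
  · intro j _ hj
    rw [hP.2.2.1 i j (fun h => hj h.symm), Matrix.trace_zero, mul_zero]
  · intro h; exact absurd (Finset.mem_univ i) h

lemma posSemidef_sum (f : ι → Matrix N N ℂ) (h : ∀ i, (f i).PosSemidef) :
    (∑ i, f i).PosSemidef := by
  constructor
  · show _ᴴ = _
    rw [Matrix.conjTranspose_sum]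
    exact Finset.sum_congr rfl fun i _ => (h i).1.eq
  · intro x
    exact (Matrix.posSemidef_sum Finset.univ fun i _ => h i).2 x

lemma proj_trace_re {A B : Matrix N N ℂ} (hA1 : Aᴴ = A) (hA2 : A * A = A)
    (hB1 : Bᴴ = B) (hB2 : B * B = B) :
    (A * B).trace = (((A * B).trace).re : ℂ) ∧ 0 ≤ ((A * B).trace).re := by
  have hM : (A * B) * (A * B)ᴴ = A * B * A := by
    rw [Matrix.conjTranspose_mul, hA1, hB1]
    calc A * B * (B * A) = A * (B * (B * A)) := by rw [mul_assoc]
      _ = A * (B * B * A) := by rw [← mul_assoc B B A]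
      _ = A * B * A := by rw [hB2, mul_assoc]
  have htr : (A * B * A).trace = (A * B).trace := by
    rw [Matrix.trace_mul_cycle, hA2]
  have hpos : ((A * B) * (A * B)ᴴ).trace
      = ((∑ i, ∑ j, Complex.normSq ((A * B) i j) : ℝ) : ℂ) := by
    simp only [Matrix.trace, Matrix.diag, Matrix.mul_apply, Matrix.conjTranspose_apply]
    push_cast
    refine Finset.sum_congr rfl fun i _ => Finset.sum_congr rfl fun j _ => ?_
    rw [show (star (∑ j_1, A i j_1 * B j_1 j)) = (starRingEnd ℂ) (∑ j_1, A i j_1 * B j_1 j)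
      from rfl, Complex.mul_conj]
  have key : (A * B).trace = ((∑ i, ∑ j, Complex.normSq ((A * B) i j) : ℝ) : ℂ) := by
    rw [← htr, ← hM, hpos]
  constructor
  · rw [key]; simp
  · rw [key]
    simp only [Complex.ofReal_re]
    exact Finset.sum_nonneg fun i _ => Finset.sum_nonneg fun j _ => Complex.normSq_nonneg _
end Aux4

/-- The relative entropy of the compound state w.r.t. the product state equals
the Holevo-type sum. -/
theorem stmt3_compound_relEnt [Fintype n] [DecidableEq n] [Fintype m] [DecidableEq m]
    (ρ : Matrix n n ℂ) (lam : n → ℝ) (E : n → Matrix n n ℂ)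
    (hρ : IsDensity ρ) (hdec : SchattenDecomp ρ lam E)
    (Λ : Matrix n n ℂ → Matrix m m ℂ) (hΛ : IsCPTP Λ) :
    relEnt (∑ k, (lam k : ℂ) • (E k ⊗ₖ Λ (E k))) (ρ ⊗ₖ Λ ρ) =
      ∑ k, lam k * relEnt (Λ (E k)) (Λ ρ) := by
  obtain ⟨hρpsd, hρtr⟩ := hρ
  obtain ⟨hlam, hE, hEtr, hρeq⟩ := hdec
  obtain ⟨ι₀, hι₀, K, hK, hK1⟩ := hΛ
  -- basic facts about Λ
  have hΛherm : ∀ A : Matrix n n ℂ, A.IsHermitian → (Λ A).IsHermitian := by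
    intro A hA
    show _ᴴ = _
    rw [hK, Matrix.conjTranspose_sum]
    refine Finset.sum_congr rfl fun i _ => ?_
    rw [Matrix.conjTranspose_mul, Matrix.conjTranspose_mul,
      Matrix.conjTranspose_conjTranspose, hA.eq, Matrix.mul_assoc]
  have hEpsd : ∀ k, (E k).PosSemidef := by
    intro k
    have h := Matrix.posSemidef_conjTranspose_mul_self (E k)
    rwa [(hE.1 k).eq, hE.2.1 k] at h
  have hΛpsd : ∀ A : Matrix n n ℂ, A.PosSemidef → (Λ A).PosSemidef := by
    intro A hA
    rw [hK]
    exact posSemidef_sum _ fun i => hA.mul_mul_conjTranspose_same (K i)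
  have hΛlin : Λ ρ = ∑ k, (lam k : ℂ) • Λ (E k) := by
    simp only [hK, hρeq, Matrix.mul_sum, Matrix.sum_mul, Matrix.mul_smul, Matrix.smul_mul,
      Finset.smul_sum]
    rw [Finset.sum_comm]
  -- spectral data for the Λ (E k)
  have hermQk : ∀ k, (Λ (E k)).IsHermitian := fun k => hΛherm _ (hE.1 k)
  have hQex := fun k => spectral_orthres (hermQk k)
  choose Q hQor hQtr hQeq hQlog using hQex
  set μ : n → m → ℝ := fun k => (hermQk k).eigenvalues with hμdef
  have hμ0 : ∀ k a, 0 ≤ μ k a := fun k a => (hΛpsd _ (hEpsd k)).eigenvalues_nonneg a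
  have hQeq' : ∀ k, Λ (E k) = ∑ a, ((μ k a : ℝ) : ℂ) • Q k a := hQeq
  have hQlog' : ∀ k, matLog (Λ (E k)) = ∑ a, ((Real.log (μ k a) : ℝ) : ℂ) • Q k a := hQlog
  -- spectral data for Λ ρ
  have hermρΛ : (Λ ρ).IsHermitian := hΛherm _ hρpsd.1
  obtain ⟨R, hRor, hRtr, hReq, hRlog⟩ := spectral_orthres hermρΛ
  set ν : m → ℝ := hermρΛ.eigenvalues with hνdef
  have hν0 : ∀ b, 0 ≤ ν b := fun b => (hΛpsd _ hρpsd).eigenvalues_nonneg b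
  have hReq' : Λ ρ = ∑ b, ((ν b : ℝ) : ℂ) • R b := hReq
  have hRlog' : matLog (Λ ρ) = ∑ b, ((Real.log (ν b) : ℝ) : ℂ) • R b := hRlog
  -- compound resolutions
  set S : n × m → Matrix (n × m) (n × m) ℂ := fun ka => E ka.1 ⊗ₖ Q ka.1 ka.2 with hSdef
  have hSor : OrthRes S := orthres_kron E Q hE hQor
  set T : n × m → Matrix (n × m) (n × m) ℂ := fun jb => E jb.1 ⊗ₖ R jb.2 with hTdef
  have hTor : OrthRes T := orthres_kron E (fun _ => R) hE (fun _ => hRor)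
  have hStr : ∀ ka, (S ka).trace = 1 := by
    intro ka
    rw [hSdef]
    dsimp only
    rw [Matrix.trace_kronecker, hEtr, hQtr, one_mul]
  have hσeq : (∑ k, (lam k : ℂ) • (E k ⊗ₖ Λ (E k)))
      = ∑ ka : n × m, ((lam ka.1 * μ ka.1 ka.2 : ℝ) : ℂ) • S ka := by
    rw [Fintype.sum_prod_type]
    refine Finset.sum_congr rfl fun k _ => ?_
    rw [hQeq' k, kron_sum, Finset.smul_sum]
    refine Finset.sum_congr rfl fun a _ => ?_
    rw [Matrix.kronecker_smul, smul_smul]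
    congr 1
    push_cast
    ring
  have hprodeq : ρ ⊗ₖ Λ ρ = ∑ jb : n × m, ((lam jb.1 * ν jb.2 : ℝ) : ℂ) • T jb := by
    rw [hReq', hρeq, sum_kron, Fintype.sum_prod_type]
    refine Finset.sum_congr rfl fun j _ => ?_
    rw [Matrix.smul_kronecker, kron_sum, Finset.smul_sum]
    refine Finset.sum_congr rfl fun b _ => ?_
    rw [Matrix.kronecker_smul, smul_smul]
    congr 1
    push_cast
    ring
  have hlogσ : matLog (∑ k, (lam k : ℂ) • (E k ⊗ₖ Λ (E k)))
      = ∑ ka : n × m, ((Real.log (lam ka.1 * μ ka.1 ka.2) : ℝ) : ℂ) • S ka := by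
    rw [hσeq]
    exact matLog_orthres S hSor _
  have hlogprod : matLog (ρ ⊗ₖ Λ ρ)
      = ∑ jb : n × m, ((Real.log (lam jb.1 * ν jb.2) : ℝ) : ℂ) • T jb := by
    rw [hprodeq]
    exact matLog_orthres T hTor _
  -- trace overlaps
  set t : n → m → m → ℝ := fun k a b => ((Q k a * R b).trace).re with htdef
  have hQRre : ∀ k a b, (Q k a * R b).trace = (t k a b : ℂ) :=
    fun k a b => (proj_trace_re ((hQor k).1 a) ((hQor k).2.1 a) (hRor.1 b) (hRor.2.1 b)).1
  have ht0 : ∀ k a b, 0 ≤ t k a b :=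
    fun k a b => (proj_trace_re ((hQor k).1 a) ((hQor k).2.1 a) (hRor.1 b) (hRor.2.1 b)).2
  have ht1 : ∀ k a, ∑ b, t k a b = 1 := by
    intro k a
    have h1 : ∑ b, (Q k a * R b).trace = 1 := by
      rw [← Matrix.trace_sum, ← Matrix.mul_sum, hRor.2.2.2, mul_one, hQtr]
    have h2 : ∑ b, (Q k a * R b).trace = ((∑ b, t k a b : ℝ) : ℂ) := by
      push_cast
      exact Finset.sum_congr rfl fun b _ => hQRre k a b
    rw [h2] at h1
    exact_mod_cast h1
  have hST : ∀ ka jb : n × m, (S ka * T jb).trace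
      = if ka.1 = jb.1 then ((t ka.1 ka.2 jb.2 : ℝ) : ℂ) else 0 := by
    rintro ⟨k, a⟩ ⟨j, b⟩
    show (E k ⊗ₖ Q k a * (E j ⊗ₖ R b)).trace = _
    rw [← Matrix.mul_kronecker_mul, Matrix.trace_kronecker]
    by_cases h : k = j
    · subst h
      rw [if_pos rfl, hE.2.1 k, hEtr, one_mul, hQRre]
    · rw [if_neg h, hE.2.2.1 k j h, Matrix.trace_zero, zero_mul]
  -- support fact
  have hsum_b : ∀ b, (∑ k, ∑ a, lam k * (μ k a * t k a b)) = ν b := by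
    intro b
    have h1 : (Λ ρ * R b).trace = (ν b : ℂ) := by
      rw [hReq', Finset.sum_mul]
      simp_rw [Matrix.smul_mul, Matrix.trace_sum, Matrix.trace_smul, smul_eq_mul]
      rw [Finset.sum_eq_single b]
      · rw [hRor.2.1 b, hRtr, mul_one]
      · intro c _ hc
        rw [hRor.2.2.1 c b hc, Matrix.trace_zero, mul_zero]
      · intro h; exact absurd (Finset.mem_univ b) h
    have h2 : (Λ ρ * R b).trace = ((∑ k, ∑ a, lam k * (μ k a * t k a b) : ℝ) : ℂ) := by
      rw [hΛlin, Finset.sum_mul]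
      simp_rw [Matrix.smul_mul, Matrix.trace_sum, Matrix.trace_smul, smul_eq_mul]
      push_cast
      refine Finset.sum_congr rfl fun k _ => ?_
      rw [hQeq' k, Finset.sum_mul]
      simp_rw [Matrix.smul_mul, Matrix.trace_sum, Matrix.trace_smul, smul_eq_mul]
      rw [Finset.mul_sum]
      refine Finset.sum_congr rfl fun a _ => ?_
      rw [hQRre]
    rw [h2] at h1
    exact_mod_cast h1
  have hsupp : ∀ b, ν b = 0 → ∀ k a, lam k * (μ k a * t k a b) = 0 := by
    intro b hb k a
    have h0 : (∑ ka : n × m, lam ka.1 * (μ ka.1 ka.2 * t ka.1 ka.2 b)) = 0 := by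
      rw [Fintype.sum_prod_type, hsum_b b, hb]
    have hnn : ∀ ka ∈ (Finset.univ : Finset (n × m)),
        0 ≤ lam ka.1 * (μ ka.1 ka.2 * t ka.1 ka.2 b) := by
      rintro ⟨k', a'⟩ -
      exact mul_nonneg (hlam _) (mul_nonneg (hμ0 _ _) (ht0 _ _ _))
    have := (Finset.sum_eq_zero_iff_of_nonneg hnn).mp h0 (k, a) (Finset.mem_univ _)
    exact this
  -- compute both sides
  have c1 : ((∑ k, (lam k : ℂ) • (E k ⊗ₖ Λ (E k))) *
        (matLog (∑ k, (lam k : ℂ) • (E k ⊗ₖ Λ (E k))) - matLog (ρ ⊗ₖ Λ ρ))).trace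
      = ((∑ ka : n × m, lam ka.1 * μ ka.1 ka.2 * Real.log (lam ka.1 * μ ka.1 ka.2) : ℝ) : ℂ)
        - ((∑ ka : n × m, ∑ b, lam ka.1 * μ ka.1 ka.2 * Real.log (lam ka.1 * ν b)
            * t ka.1 ka.2 b : ℝ) : ℂ) := by
    rw [Matrix.mul_sub, Matrix.trace_sub]
    congr 1
    · rw [hlogσ, hσeq, trace_orthres_pair S hSor hStr]
      push_cast
      exact Finset.sum_congr rfl fun ka _ => by ring
    · rw [hlogprod, hσeq, trace_sum_smul_mul]
      push_cast
      refine Finset.sum_congr rfl fun ka _ => ?_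
      rw [Fintype.sum_prod_type]
      rw [Finset.sum_eq_single ka.1]
      · refine Finset.sum_congr rfl fun b _ => ?_
        rw [hST ka (ka.1, b), if_pos rfl]
      · intro j _ hj
        refine Finset.sum_eq_zero fun b _ => ?_
        rw [hST ka (j, b), if_neg (fun h => hj h.symm), mul_zero]
      · intro h; exact absurd (Finset.mem_univ ka.1) h
  have c2 : ∀ k, relEnt (Λ (E k)) (Λ ρ)
      = (∑ a, μ k a * Real.log (μ k a)) - ∑ a, ∑ b, μ k a * Real.log (ν b) * t k a b := by
    intro k
    have d1 : (Λ (E k) * matLog (Λ (E k))).trace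
        = ((∑ a, μ k a * Real.log (μ k a) : ℝ) : ℂ) := by
      conv_lhs => rw [hQlog' k, hQeq' k]
      rw [trace_orthres_pair (Q k) (hQor k) (hQtr k)]
      push_cast
      rfl
    have d2 : (Λ (E k) * matLog (Λ ρ)).trace
        = ((∑ a, ∑ b, μ k a * Real.log (ν b) * t k a b : ℝ) : ℂ) := by
      conv_lhs => rw [hRlog', hQeq' k]
      rw [trace_sum_smul_mul]
      push_cast
      refine Finset.sum_congr rfl fun a _ => Finset.sum_congr rfl fun b _ => ?_
      rw [hQRre]
    show ((Λ (E k) * (matLog (Λ (E k)) - matLog (Λ ρ))).trace).re = _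
    rw [Matrix.mul_sub, Matrix.trace_sub, d1, d2]
    rw [← Complex.ofReal_sub, Complex.ofReal_re]
  have ptwise : ∀ k a b,
      lam k * μ k a * Real.log (lam k * μ k a) * t k a b
        - lam k * μ k a * Real.log (lam k * ν b) * t k a b
      = lam k * (μ k a * Real.log (μ k a)) * t k a b
        - lam k * (μ k a * (Real.log (ν b) * t k a b)) := by
    intro k a b
    by_cases hl : lam k = 0
    · simp [hl]
    by_cases hm : μ k a = 0
    · simp [hm]
    by_cases htz : t k a b = 0
    · simp [htz]
    by_cases hv : ν b = 0
    · exact absurd (hsupp b hv k a) (mul_ne_zero hl (mul_ne_zero hm htz))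
    · rw [Real.log_mul hl hm, Real.log_mul hl hv]
      ring
  have final : (∑ ka : n × m, lam ka.1 * μ ka.1 ka.2 * Real.log (lam ka.1 * μ ka.1 ka.2))
      - (∑ ka : n × m, ∑ b, lam ka.1 * μ ka.1 ka.2 * Real.log (lam ka.1 * ν b) * t ka.1 ka.2 b)
      = ∑ k, lam k * ((∑ a, μ k a * Real.log (μ k a))
          - ∑ a, ∑ b, μ k a * Real.log (ν b) * t k a b) := by
    rw [Fintype.sum_prod_type, Fintype.sum_prod_type, ← Finset.sum_sub_distrib]
    refine Finset.sum_congr rfl fun k _ => ?_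
    have e1 : ∑ a, lam k * μ k a * Real.log (lam k * μ k a)
        = ∑ a, ∑ b, lam k * μ k a * Real.log (lam k * μ k a) * t k a b := by
      refine Finset.sum_congr rfl fun a _ => ?_
      rw [← Finset.mul_sum, ht1 k a, mul_one]
    have e2a : ∑ a, ∑ b, lam k * (μ k a * Real.log (μ k a)) * t k a b
        = lam k * ∑ a, μ k a * Real.log (μ k a) := by
      rw [Finset.mul_sum]
      refine Finset.sum_congr rfl fun a _ => ?_
      rw [← Finset.mul_sum, ht1 k a, mul_one]
    have e2b : ∑ a, ∑ b, lam k * (μ k a * (Real.log (ν b) * t k a b))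
        = lam k * ∑ a, ∑ b, μ k a * Real.log (ν b) * t k a b := by
      rw [Finset.mul_sum]
      refine Finset.sum_congr rfl fun a _ => ?_
      rw [Finset.mul_sum]
      refine Finset.sum_congr rfl fun b _ => ?_
      ring
    rw [e1, mul_sub, ← e2a, ← e2b, ← Finset.sum_sub_distrib, ← Finset.sum_sub_distrib]
    refine Finset.sum_congr rfl fun a _ => ?_
    rw [← Finset.sum_sub_distrib, ← Finset.sum_sub_distrib]
    exact Finset.sum_congr rfl fun b _ => ptwise k a b
  show ((((∑ k, (lam k : ℂ) • (E k ⊗ₖ Λ (E k))) *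
      (matLog (∑ k, (lam k : ℂ) • (E k ⊗ₖ Λ (E k))) - matLog (ρ ⊗ₖ Λ ρ))).trace).re) = _
  rw [c1, ← Complex.ofReal_sub, Complex.ofReal_re, final]
  exact Finset.sum_congr rfl fun k _ => by rw [c2 k]
end

section
/- For density matrices σ, τ and an orthogonal resolution of identity {E_i}, the relative entropy is bounded below by the classical relative entropy of the measurement outcome distributions: S(σ, τ) ≥ ∑_i Tr[σ E_i] (log Tr[σ E_i] − log Tr[τ E_i]). -/
open Matrix Kronecker
open scoped BigOperators ComplexOrder

variable {n m : Type*}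

section AuxLemmasForStmt9

open MeasureTheory Set

private lemma aux_tendsto {l m : ℝ} (hl : 0 < l) (hm : 0 < m) :
    Filter.Tendsto (fun t : ℝ => l * (Real.log (1+t) - Real.log (l+t*m)))
      Filter.atTop (nhds (l * (-Real.log m))) := by
  have h2 : Filter.Tendsto (fun t : ℝ => (t⁻¹+1)/(l*t⁻¹+m)) Filter.atTop
      (nhds ((0+1)/(l*0+m))) :=
    Filter.Tendsto.div (tendsto_inv_atTop_zero.add tendsto_const_nhds)
      ((tendsto_inv_atTop_zero.const_mul l).add tendsto_const_nhds) (by simp [hm.ne'])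
  have h1 : Filter.Tendsto (fun t : ℝ => (1+t)/(l+t*m)) Filter.atTop (nhds m⁻¹) := by
    have : ((0:ℝ)+1)/(l*0+m) = m⁻¹ := by field_simp; ring
    rw [← this]
    apply h2.congr'
    filter_upwards [Filter.eventually_gt_atTop (0:ℝ)] with t ht
    rw [div_eq_div_iff (by positivity) (by positivity)]
    field_simp
    try ring
    try tauto
  have h3 : Filter.Tendsto (fun t : ℝ => l * Real.log ((1+t)/(l+t*m))) Filter.atTop
      (nhds (l * Real.log m⁻¹)) :=
    (((Real.continuousAt_log (by positivity)).tendsto).comp h1).const_mul l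
  rw [Real.log_inv] at h3
  apply h3.congr'
  filter_upwards [Filter.eventually_gt_atTop (0:ℝ)] with t ht
  rw [Real.log_div (by positivity) (by positivity)]

private lemma aux_deriv {l m : ℝ} (hl : 0 < l) (hm : 0 < m) {t : ℝ} (ht : t ∈ Ici (0:ℝ)) :
    HasDerivAt (fun t : ℝ => l * (Real.log (1+t) - Real.log (l+t*m)))
      ((l*(l-m))/((1+t)*(l+t*m))) t := by
  have ht0 : (0:ℝ) ≤ t := ht
  have h1 : (0:ℝ) < 1 + t := by linarith
  have h2 : (0:ℝ) < l + t*m := by positivity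
  have d1 : HasDerivAt (fun t : ℝ => Real.log (1+t)) (1/(1+t)) t := by
    have := ((hasDerivAt_id t).const_add (1:ℝ)).log h1.ne'
    simpa using this
  have d2 : HasDerivAt (fun t : ℝ => Real.log (l+t*m)) (m/(l+t*m)) t := by
    have := (((hasDerivAt_id t).mul_const m).const_add l).log h2.ne'
    simpa using this
  have := (d1.sub d2).const_mul l
  refine this.congr_deriv ?_
  field_simp
  try ring
  try tauto

/-- key scalar improper integral identity -/
private lemma key_int {l m : ℝ} (hl : 0 < l) (hm : 0 < m) :
    IntegrableOn (fun t : ℝ => (l*(l-m))/((1+t)*(l+t*m))) (Ioi (0:ℝ)) ∧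
    ∫ t in Ioi (0:ℝ), (l*(l-m))/((1+t)*(l+t*m)) = l*(Real.log l - Real.log m) := by
  have hT := aux_tendsto hl hm
  have hD := fun t ht => aux_deriv hl hm (t := t) ht
  have hval : l * (-Real.log m) - l * (Real.log (1+0) - Real.log (l+0*m))
      = l*(Real.log l - Real.log m) := by
    simp [Real.log_one]
    ring
  rcases le_or_gt m l with hlm | hlm
  · have hpos : ∀ t ∈ Ioi (0:ℝ), 0 ≤ (l*(l-m))/((1+t)*(l+t*m)) := by
      intro t ht
      have : (0:ℝ) < t := ht
      have h1 : (0:ℝ) < 1 + t := by linarith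
      have h2 : (0:ℝ) < l + t*m := by positivity
      have : 0 ≤ l*(l-m) := by nlinarith
      positivity
    refine ⟨integrableOn_Ioi_deriv_of_nonneg' hD hpos hT, ?_⟩
    rw [integral_Ioi_of_hasDerivAt_of_nonneg' hD hpos hT, hval]
  · have hneg : ∀ t ∈ Ioi (0:ℝ), (l*(l-m))/((1+t)*(l+t*m)) ≤ 0 := by
      intro t ht
      have : (0:ℝ) < t := ht
      have h1 : (0:ℝ) < 1 + t := by linarith
      have h2 : (0:ℝ) < l + t*m := by positivity
      have hn : l*(l-m) ≤ 0 := by nlinarith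
      exact div_nonpos_of_nonpos_of_nonneg hn (by positivity)
    refine ⟨integrableOn_Ioi_deriv_of_nonpos' hD hneg hT, ?_⟩
    rw [integral_Ioi_of_hasDerivAt_of_nonpos' hD hneg hT, hval]


open MeasureTheory Set

-- per-term algebraic identity
private lemma term_split {l m t : ℝ} (hl : 0 ≤ l) (hm : 0 ≤ m) (ht : 0 < t) :
    (l*(l-m))/(l+t*m) = l - (1+t)*m + t*(1+t)*(m^2/(l+t*m)) := by
  rcases eq_or_lt_of_le (by positivity : (0:ℝ) ≤ l + t*m) with hd | hd
  · have hm0 : m = 0 := by nlinarith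
    have hl0 : l = 0 := by nlinarith
    simp [hm0, hl0]
  · rw [div_eq_iff hd.ne', add_mul _ _ (l+t*m), mul_assoc (t*(1+t)), div_mul_cancel₀ _ hd.ne']
    ring

-- per-term Cauchy-Schwarz bound
private lemma term_cs {l m t : ℝ} (w a : ℂ) (hl : 0 ≤ l) (hm : 0 ≤ m) (ht : 0 < t) :
    2*(m * ((starRingEnd ℂ) w * a).re) - (l + t*m) * Complex.normSq a
      ≤ Complex.normSq w * (m^2/(l+t*m)) := by
  rcases eq_or_lt_of_le (by positivity : (0:ℝ) ≤ l + t*m) with hd | hd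
  · have hm0 : m = 0 := by nlinarith
    rw [← hd, hm0]
    simp
  · have hre : ((starRingEnd ℂ) w * a).re ≤ ‖w‖ * ‖a‖ := by
      calc ((starRingEnd ℂ) w * a).re ≤ ‖(starRingEnd ℂ) w * a‖ := Complex.re_le_norm _
        _ = ‖w‖ * ‖a‖ := by rw [norm_mul, Complex.norm_conj]
    have h1 : 2*(m * ((starRingEnd ℂ) w * a).re) ≤ 2*(m * (‖w‖ * ‖a‖)) := by
      nlinarith
    have h2 : 2*(m * (‖w‖ * ‖a‖)) - (l+t*m) * Complex.normSq a
        ≤ Complex.normSq w * (m^2/(l+t*m)) := by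
      rw [Complex.normSq_eq_norm_sq, Complex.normSq_eq_norm_sq, ← mul_div_assoc, le_div_iff₀ hd]
      nlinarith [sq_nonneg (m * ‖w‖ - (l+t*m) * ‖a‖),
        norm_nonneg w, norm_nonneg a]
    linarith

private lemma crux {K I : Type*} [Fintype K] [Fintype I]
    (T lam mu : K → ℝ) (p q : I → ℝ) (t : ℝ) (ht : 0 < t)
    (hT : ∀ k, 0 ≤ T k) (hlam : ∀ k, 0 ≤ lam k) (hmu : ∀ k, 0 ≤ mu k)
    (hp : ∀ i, 0 ≤ p i) (hq : ∀ i, 0 ≤ q i)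
    (hsum1 : ∑ k, T k * lam k = 1) (hsum2 : ∑ k, T k * mu k = 1)
    (hsp : ∑ i, p i = 1) (hsq : ∑ i, q i = 1)
    (w α : K → ℂ) (hw : ∀ k, T k = Complex.normSq (w k))
    (h1 : ∑ k, mu k * ((starRingEnd ℂ) (w k) * α k).re
        = ∑ i, (q i / (p i + t*q i)) * q i)
    (h2 : ∑ k, lam k * Complex.normSq (α k) = ∑ i, (q i/(p i+t*q i))^2 * p i)
    (h3 : ∑ k, mu k * Complex.normSq (α k) = ∑ i, (q i/(p i+t*q i))^2 * q i) :
    ∑ i, (p i * (p i - q i))/(p i + t*q i)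
      ≤ ∑ k, T k * ((lam k * (lam k - mu k))/(lam k + t*mu k)) := by
  have hd0 : ∀ i, (0:ℝ) ≤ p i + t * q i := fun i =>
    add_nonneg (hp i) (mul_nonneg ht.le (hq i))
  have hFG : ∑ i, (q i)^2/(p i + t*q i) ≤ ∑ k, T k * ((mu k)^2/(lam k + t*mu k)) := by
    have hstep : ∀ k, 2*(mu k * ((starRingEnd ℂ) (w k) * α k).re)
        - (lam k + t*mu k) * Complex.normSq (α k)
        ≤ T k * ((mu k)^2/(lam k + t*mu k)) := by
      intro k
      rw [hw k]
      exact term_cs (w k) (α k) (hlam k) (hmu k) ht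
    calc ∑ i, (q i)^2/(p i + t*q i)
        = 2*(∑ i, (q i/(p i+t*q i)) * q i) - ((∑ i, (q i/(p i+t*q i))^2 * p i)
            + t*(∑ i, (q i/(p i+t*q i))^2 * q i)) := by
          rw [Finset.mul_sum, Finset.mul_sum, ← Finset.sum_add_distrib,
            ← Finset.sum_sub_distrib]
          apply Finset.sum_congr rfl
          intro i _
          rcases eq_or_lt_of_le (hd0 i) with hd | hd
          · have hq0 : q i = 0 := by nlinarith [hp i, hq i]
            rw [← hd, hq0]
            simp
          · field_simp
            ring
      _ = 2*(∑ k, mu k * ((starRingEnd ℂ) (w k) * α k).re)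
            - ((∑ k, lam k * Complex.normSq (α k))
            + t*(∑ k, mu k * Complex.normSq (α k))) := by rw [h1, h2, h3]
      _ = ∑ k, (2*(mu k * ((starRingEnd ℂ) (w k) * α k).re)
            - (lam k + t*mu k) * Complex.normSq (α k)) := by
          rw [Finset.mul_sum, Finset.mul_sum, ← Finset.sum_add_distrib,
            ← Finset.sum_sub_distrib]
          apply Finset.sum_congr rfl
          intro k _
          ring
      _ ≤ ∑ k, T k * ((mu k)^2/(lam k + t*mu k)) := Finset.sum_le_sum (fun k _ => hstep k)
  have lhs_eq : ∑ i, (p i * (p i - q i))/(p i + t*q i)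
      = 1 - (1+t) + t*(1+t) * ∑ i, (q i)^2/(p i + t*q i) := by
    rw [Finset.mul_sum]
    have : ∀ i ∈ Finset.univ, (p i * (p i - q i))/(p i + t*q i)
        = p i - (1+t)*q i + t*(1+t)*((q i)^2/(p i + t*q i)) := fun i _ =>
      term_split (hp i) (hq i) ht
    rw [Finset.sum_congr rfl this]
    rw [Finset.sum_add_distrib, Finset.sum_sub_distrib, hsp, ← Finset.mul_sum, hsq]
    ring
  have rhs_eq : ∑ k, T k * ((lam k * (lam k - mu k))/(lam k + t*mu k))
      = 1 - (1+t) + t*(1+t) * ∑ k, T k * ((mu k)^2/(lam k + t*mu k)) := by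
    have : ∀ k ∈ Finset.univ, T k * ((lam k * (lam k - mu k))/(lam k + t*mu k))
        = T k * lam k - (1+t)*(T k * mu k) + t*(1+t)*(T k * ((mu k)^2/(lam k + t*mu k))) := by
      intro k _
      rw [term_split (hlam k) (hmu k) ht]
      ring
    rw [Finset.sum_congr rfl this, Finset.sum_add_distrib, Finset.sum_sub_distrib,
      hsum1, ← Finset.mul_sum, hsum2, ← Finset.mul_sum]
    ring
  rw [lhs_eq, rhs_eq]
  have hpos : (0:ℝ) < t*(1+t) := by nlinarith
  nlinarith [hFG]


open Matrix
open scoped ComplexOrder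

private lemma trace_diag_mul {n : Type*} [Fintype n] [DecidableEq n]
    (d : n → ℂ) (M : Matrix n n ℂ) :
    (Matrix.diagonal d * M).trace = ∑ i, d i * M i i := by
  simp [Matrix.trace, Matrix.diag, Matrix.diagonal_mul]

open scoped MatrixOrder in
private lemma trace_psd_proj {n : Type*} [Fintype n] [DecidableEq n]
    {ρ B : Matrix n n ℂ} (hρ : ρ.PosSemidef) (hB : B.IsHermitian) (hBi : B * B = B) :
    (ρ * B).trace = (((ρ * B).trace.re : ℝ) : ℂ) ∧ 0 ≤ (ρ * B).trace.re ∧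
      ((ρ * B).trace.re = 0 → ρ * B = 0) := by
  have hρ0 : 0 ≤ ρ := Matrix.nonneg_iff_posSemidef.mpr hρ
  have hSh : (CFC.sqrt ρ).IsHermitian := (CFC.sqrt_nonneg ρ).isSelfAdjoint
  set M := B * CFC.sqrt ρ with hM
  have hMt : Mᴴ * M = CFC.sqrt ρ * B * CFC.sqrt ρ := by
    rw [hM, conjTranspose_mul, hSh.eq, hB.eq, Matrix.mul_assoc, ← Matrix.mul_assoc B B,
      hBi, ← Matrix.mul_assoc]
  have key : (ρ * B).trace = (Mᴴ * M).trace := by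
    rw [hMt, trace_mul_cycle, CFC.sqrt_mul_sqrt_self ρ hρ0]
  have entry : (Mᴴ * M).trace = ((∑ j, ∑ i, Complex.normSq (M i j) : ℝ) : ℂ) := by
    push_cast
    simp only [Matrix.trace, Matrix.diag, Matrix.mul_apply, Matrix.conjTranspose_apply]
    congr 1
    ext j
    congr 1
    ext i
    rw [Complex.star_def, ← Complex.normSq_eq_conj_mul_self]
  have htr : (ρ * B).trace = ((∑ j, ∑ i, Complex.normSq (M i j) : ℝ) : ℂ) := key.trans entry
  have hre : (ρ * B).trace.re = ∑ j, ∑ i, Complex.normSq (M i j) := by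
    rw [htr, Complex.ofReal_re]
  refine ⟨by rw [hre, ← htr], ?_, ?_⟩
  · rw [hre]
    exact Finset.sum_nonneg fun j _ => Finset.sum_nonneg fun i _ => Complex.normSq_nonneg _
  · intro h0
    rw [hre] at h0
    have hM0 : M = 0 := by
      ext i j
      have h1 : ∀ j ∈ Finset.univ, (0:ℝ) ≤ ∑ i, Complex.normSq (M i j) := by
        intro j _
        exact Finset.sum_nonneg fun i _ => Complex.normSq_nonneg _
      have h2 := (Finset.sum_eq_zero_iff_of_nonneg h1).mp h0 j (Finset.mem_univ j)
      have h3 : ∀ i ∈ Finset.univ, (0:ℝ) ≤ Complex.normSq (M i j) := by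
        intro i _; exact Complex.normSq_nonneg _
      have h4 := (Finset.sum_eq_zero_iff_of_nonneg h3).mp h2 i (Finset.mem_univ i)
      simpa [Complex.normSq_eq_zero] using h4
    have hBρ : B * ρ = 0 := by
      have : B * ρ = M * CFC.sqrt ρ := by rw [hM, Matrix.mul_assoc, CFC.sqrt_mul_sqrt_self ρ hρ0]
      rw [this, hM0, Matrix.zero_mul]
    calc ρ * B = (B * ρ)ᴴ := by rw [conjTranspose_mul, hB.eq, hρ.1.eq]
      _ = 0 := by rw [hBρ, conjTranspose_zero]


open Matrix
open scoped ComplexOrder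

variable {n : Type*} [Fintype n] [DecidableEq n]

private lemma rowsum_normSq {W : Matrix n n ℂ} (h : W * Wᴴ = 1) (a : n) :
    ∑ b, Complex.normSq (W a b) = 1 := by
  have h1 : (W * Wᴴ) a a = 1 := by rw [h, Matrix.one_apply_eq]
  rw [Matrix.mul_apply] at h1
  have h2 : ∀ b, W a b * Wᴴ b a = ((Complex.normSq (W a b) : ℝ) : ℂ) := by
    intro b
    rw [Matrix.conjTranspose_apply, Complex.star_def, Complex.mul_conj]
  rw [Finset.sum_congr rfl (fun b _ => h2 b)] at h1
  have := congrArg Complex.re h1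
  simpa using this

private lemma colsum_normSq {W : Matrix n n ℂ} (h : Wᴴ * W = 1) (b : n) :
    ∑ a, Complex.normSq (W a b) = 1 := by
  have h1 := rowsum_normSq (W := Wᴴ) (by rwa [Matrix.conjTranspose_conjTranspose]) b
  simpa [Matrix.conjTranspose_apply, Complex.star_def, Complex.normSq_conj] using h1

private lemma trace_diag_mul' (d : n → ℂ) (M : Matrix n n ℂ) :
    (Matrix.diagonal d * M).trace = ∑ i, d i * M i i := by
  simp [Matrix.trace, Matrix.diag, Matrix.diagonal_mul]

private lemma cross_diag_trace (U V : Matrix n n ℂ) (l g : n → ℝ) :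
    (U * Matrix.diagonal (fun a => (l a : ℂ)) * Uᴴ *
      (V * Matrix.diagonal (fun b => (g b : ℂ)) * Vᴴ)).trace
      = ((∑ a, ∑ b, l a * g b * Complex.normSq ((Uᴴ*V) a b) : ℝ) : ℂ) := by
  set W := Uᴴ * V with hW
  have step1 : (U * Matrix.diagonal (fun a => (l a : ℂ)) * Uᴴ *
      (V * Matrix.diagonal (fun b => (g b : ℂ)) * Vᴴ)).trace
      = (Matrix.diagonal (fun a => (l a : ℂ)) *
          (W * Matrix.diagonal (fun b => (g b : ℂ)) * Wᴴ)).trace := by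
    rw [hW, Matrix.conjTranspose_mul, Matrix.conjTranspose_conjTranspose]
    rw [show U * Matrix.diagonal (fun a => (l a : ℂ)) * Uᴴ *
        (V * Matrix.diagonal (fun b => (g b : ℂ)) * Vᴴ)
      = (U * Matrix.diagonal (fun a => (l a : ℂ))) *
        (Uᴴ * (V * Matrix.diagonal (fun b => (g b : ℂ)) * Vᴴ)) by
        simp only [Matrix.mul_assoc]]
    rw [Matrix.trace_mul_comm]
    rw [show Uᴴ * (V * Matrix.diagonal (fun b => (g b : ℂ)) * Vᴴ) *
        (U * Matrix.diagonal (fun a => (l a : ℂ)))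
      = (Uᴴ * (V * Matrix.diagonal (fun b => (g b : ℂ)) * Vᴴ) * U) *
        Matrix.diagonal (fun a => (l a : ℂ)) by simp only [Matrix.mul_assoc]]
    rw [Matrix.trace_mul_comm]
    congr 2
    simp only [Matrix.mul_assoc]
  rw [step1, trace_diag_mul']
  have h2 : ∀ a, (W * Matrix.diagonal (fun b => (g b : ℂ)) * Wᴴ) a a
      = ∑ b, (g b : ℂ) * ((Complex.normSq (W a b) : ℝ) : ℂ) := by
    intro a
    rw [Matrix.mul_apply]
    apply Finset.sum_congr rfl
    intro b _
    rw [Matrix.mul_diagonal, Matrix.conjTranspose_apply, Complex.star_def,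
      mul_comm (W a b) ((g b : ℂ)), mul_assoc, Complex.mul_conj]
  push_cast
  rw [Finset.sum_congr rfl (fun a _ => by rw [h2 a])]
  apply Finset.sum_congr rfl
  intro a _
  rw [Finset.mul_sum]
  apply Finset.sum_congr rfl
  intro b _
  push_cast
  ring

private lemma trace_conj_diag (V D Z : Matrix n n ℂ) :
    ((V * D * Vᴴ) * Z).trace = (D * (Vᴴ * (Z * V))).trace := by
  rw [show V * D * Vᴴ * Z = (V * D) * (Vᴴ * Z) by simp only [Matrix.mul_assoc],
    Matrix.trace_mul_comm,
    show (Vᴴ * Z) * (V * D) = ((Vᴴ * Z) * V) * D by simp only [Matrix.mul_assoc],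
    Matrix.trace_mul_comm]
  congr 1
  simp only [Matrix.mul_assoc]

private lemma aggE1 {U V Y : Matrix n n ℂ} (hUU : U * Uᴴ = 1) (mu : n → ℝ) :
    ((V * Matrix.diagonal (fun b => (mu b : ℂ)) * Vᴴ) * Y).trace
      = ∑ b, ∑ a, (mu b : ℂ) *
          ((starRingEnd ℂ) ((Uᴴ*V) a b) * ((Uᴴ*(Y*V)) a b)) := by
  rw [trace_conj_diag, trace_diag_mul']
  apply Finset.sum_congr rfl
  intro b _
  rw [← Finset.mul_sum]
  congr 1
  have key : Vᴴ * (Y * V) = (Uᴴ*V)ᴴ * (Uᴴ*(Y*V)) := by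
    rw [Matrix.conjTranspose_mul, Matrix.conjTranspose_conjTranspose]
    rw [show Vᴴ * U * (Uᴴ * (Y * V)) = Vᴴ * (U * Uᴴ) * (Y * V) by
      simp only [Matrix.mul_assoc], hUU]
    simp only [Matrix.mul_one, Matrix.mul_assoc]
  rw [key, Matrix.mul_apply]
  apply Finset.sum_congr rfl
  intro a _
  rw [Matrix.conjTranspose_apply, Complex.star_def]

private lemma aggE2 {U V Y : Matrix n n ℂ} (hVV : V * Vᴴ = 1) (lam : n → ℝ) :
    ((U * Matrix.diagonal (fun a => (lam a : ℂ)) * Uᴴ) * (Y * Yᴴ)).trace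
      = ∑ a, ∑ b, (lam a : ℂ) * ((Complex.normSq ((Uᴴ*(Y*V)) a b) : ℝ) : ℂ) := by
  rw [trace_conj_diag, trace_diag_mul']
  apply Finset.sum_congr rfl
  intro a _
  rw [← Finset.mul_sum]
  congr 1
  have key : Uᴴ * (Y * Yᴴ * U) = (Uᴴ*(Y*V)) * (Uᴴ*(Y*V))ᴴ := by
    simp only [Matrix.conjTranspose_mul, Matrix.conjTranspose_conjTranspose,
      Matrix.mul_assoc]
    rw [show V * (Vᴴ * (Yᴴ * U)) = (V*Vᴴ) * (Yᴴ*U) by simp only [Matrix.mul_assoc],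
      hVV, Matrix.one_mul]
  rw [key, Matrix.mul_apply]
  apply Finset.sum_congr rfl
  intro b _
  rw [Matrix.conjTranspose_apply, Complex.star_def, Complex.mul_conj]

private lemma aggE3 {U V Y : Matrix n n ℂ} (hUU : U * Uᴴ = 1) (mu : n → ℝ) :
    ((V * Matrix.diagonal (fun b => (mu b : ℂ)) * Vᴴ) * (Yᴴ * Y)).trace
      = ∑ b, ∑ a, (mu b : ℂ) * ((Complex.normSq ((Uᴴ*(Y*V)) a b) : ℝ) : ℂ) := by
  rw [trace_conj_diag, trace_diag_mul']
  apply Finset.sum_congr rfl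
  intro b _
  rw [← Finset.mul_sum]
  congr 1
  have key : Vᴴ * (Yᴴ * Y * V) = (Uᴴ*(Y*V))ᴴ * (Uᴴ*(Y*V)) := by
    rw [Matrix.conjTranspose_mul, Matrix.conjTranspose_mul,
      Matrix.conjTranspose_conjTranspose]
    rw [show Vᴴ * Yᴴ * U * (Uᴴ * (Y * V)) = Vᴴ * (Yᴴ * ((U*Uᴴ) * (Y*V))) by
      simp only [Matrix.mul_assoc], hUU]
    simp only [Matrix.one_mul, Matrix.mul_assoc]
  rw [key, Matrix.mul_apply]
  apply Finset.sum_congr rfl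
  intro a _
  rw [Matrix.conjTranspose_apply, Complex.star_def, ← Complex.normSq_eq_conj_mul_self]


open Matrix MeasureTheory Set
open scoped ComplexOrder

private lemma key_int' {T l m : ℝ} (hl : 0 ≤ l) (hm : 0 ≤ m)
    (hdeg : m = 0 → T * l = 0) :
    IntegrableOn (fun t : ℝ => T * ((l*(l-m))/((1+t)*(l+t*m)))) (Ioi (0:ℝ)) ∧
    ∫ t in Ioi (0:ℝ), T * ((l*(l-m))/((1+t)*(l+t*m)))
      = T * (l*(Real.log l - Real.log m)) := by
  rcases eq_or_lt_of_le hl with hl0 | hl0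
  · have hfun : (fun t : ℝ => T * ((l*(l-m))/((1+t)*(l+t*m)))) = fun _ => 0 := by
      funext t
      rw [← hl0]
      simp
    rw [hfun, ← hl0]
    simp [integrableOn_const]
  rcases eq_or_lt_of_le hm with hm0 | hm0
  · have hT0 : T = 0 := by
      have := hdeg hm0.symm
      rcases mul_eq_zero.mp this with h | h
      · exact h
      · exact absurd h hl0.ne'
    rw [hT0]
    simp [integrableOn_const]
  · obtain ⟨hint, hval⟩ := key_int hl0 hm0
    refine ⟨hint.const_mul T, ?_⟩
    rw [MeasureTheory.integral_const_mul, hval]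

variable {n : Type*} [Fintype n] [DecidableEq n]

private lemma projSum_sq {ι : Type*} [Fintype ι] (E : ι → Matrix n n ℂ)
    (hproj : ∀ i, E i * E i = E i) (horth : ∀ i j, i ≠ j → E i * E j = 0) (c : ι → ℝ) :
    (∑ i, (c i : ℂ) • E i) * (∑ j, (c j : ℂ) • E j)
      = ∑ i, ((c i : ℂ) * (c i : ℂ)) • E i := by
  rw [Finset.sum_mul_sum]
  apply Finset.sum_congr rfl
  intro i _
  rw [Finset.sum_eq_single i]
  · rw [smul_mul_assoc, mul_smul_comm, smul_smul, hproj i]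
  · intro j _ hj
    rw [smul_mul_assoc, mul_smul_comm, smul_smul, horth i j (Ne.symm hj), smul_zero]
  · intro h
    exact absurd (Finset.mem_univ i) h

private lemma traceSum (ρ : Matrix n n ℂ) {ι : Type*} [Fintype ι]
    (E : ι → Matrix n n ℂ) (c : ι → ℂ) :
    (ρ * ∑ i, c i • E i).trace = ∑ i, c i * (ρ * E i).trace := by
  rw [Finset.mul_sum, Matrix.trace_sum]
  apply Finset.sum_congr rfl
  intro i _
  rw [Matrix.mul_smul, Matrix.trace_smul]
  rfl

private lemma projSum_herm {ι : Type*} [Fintype ι] (E : ι → Matrix n n ℂ)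
    (hherm : ∀ i, (E i).IsHermitian) (c : ι → ℝ) :
    (∑ i, (c i : ℂ) • E i)ᴴ = ∑ i, (c i : ℂ) • E i := by
  rw [Matrix.conjTranspose_sum]
  apply Finset.sum_congr rfl
  intro i _
  rw [Matrix.conjTranspose_smul, (hherm i).eq, Complex.star_def, Complex.conj_ofReal]

end AuxLemmasForStmt9

/-- Relative entropy dominates the classical relative entropy of measurement
outcome distributions. -/
theorem stmt9_measured_relEnt {ι : Type*} [Fintype ι]
    [Fintype n] [DecidableEq n]
    (σ τ : Matrix n n ℂ) (hσ : IsDensity σ) (hτ : IsDensity τ)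
    (hsupp : ∀ v : n → ℂ, τ.mulVec v = 0 → σ.mulVec v = 0)
    (E : ι → Matrix n n ℂ) (hE : OrthRes E) :
    relEnt σ τ ≥ ∑ i, ((σ * E i).trace).re *
      (Real.log ((σ * E i).trace).re - Real.log ((τ * E i).trace).re) := by
  classical
  obtain ⟨hσP, hσtr⟩ := hσ
  obtain ⟨hτP, hτtr⟩ := hτ
  obtain ⟨hEh, hEp, hEo, hEsum⟩ := hE
  set U : Matrix n n ℂ := (hσP.1.eigenvectorUnitary : Matrix n n ℂ) with hUdef
  set V : Matrix n n ℂ := (hτP.1.eigenvectorUnitary : Matrix n n ℂ) with hVdef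
  set lam : n → ℝ := hσP.1.eigenvalues with hlamdef
  set mu : n → ℝ := hτP.1.eigenvalues with hmudef
  have hUU : U * Uᴴ = 1 := by
    have := Matrix.mem_unitaryGroup_iff.mp hσP.1.eigenvectorUnitary.2
    simpa [Matrix.star_eq_conjTranspose] using this
  have hU'U : Uᴴ * U = 1 := by
    have := Matrix.mem_unitaryGroup_iff'.mp hσP.1.eigenvectorUnitary.2
    simpa [Matrix.star_eq_conjTranspose] using this
  have hVV : V * Vᴴ = 1 := by
    have := Matrix.mem_unitaryGroup_iff.mp hτP.1.eigenvectorUnitary.2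
    simpa [Matrix.star_eq_conjTranspose] using this
  have hV'V : Vᴴ * V = 1 := by
    have := Matrix.mem_unitaryGroup_iff'.mp hτP.1.eigenvectorUnitary.2
    simpa [Matrix.star_eq_conjTranspose] using this
  have hσspec : σ = U * Matrix.diagonal (fun a => ((lam a : ℝ) : ℂ)) * Uᴴ := by
    have := hσP.1.spectral_theorem
    rw [Unitary.conjStarAlgAut_apply, Matrix.star_eq_conjTranspose] at this
    exact this
  have hτspec : τ = V * Matrix.diagonal (fun b => ((mu b : ℝ) : ℂ)) * Vᴴ := by
    have := hτP.1.spectral_theorem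
    rw [Unitary.conjStarAlgAut_apply, Matrix.star_eq_conjTranspose] at this
    exact this
  set W : Matrix n n ℂ := Uᴴ * V with hWdef
  have hWW : W * Wᴴ = 1 := by
    rw [hWdef, Matrix.conjTranspose_mul, Matrix.conjTranspose_conjTranspose,
      Matrix.mul_assoc, ← Matrix.mul_assoc V Vᴴ U, hVV, Matrix.one_mul, hU'U]
  have hW'W : Wᴴ * W = 1 := by
    rw [hWdef, Matrix.conjTranspose_mul, Matrix.conjTranspose_conjTranspose,
      Matrix.mul_assoc, ← Matrix.mul_assoc U Uᴴ V, hUU, Matrix.one_mul, hV'V]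
  have hWrow : ∀ a, ∑ b, Complex.normSq (W a b) = 1 := rowsum_normSq hWW
  have hWcol : ∀ b, ∑ a, Complex.normSq (W a b) = 1 := colsum_normSq hW'W
  have hlam0 : ∀ a, 0 ≤ lam a := hσP.eigenvalues_nonneg
  have hmu0 : ∀ b, 0 ≤ mu b := hτP.eigenvalues_nonneg
  have htrdiag : ∀ (X : Matrix n n ℂ) (hX : Xᴴ * X = 1) (d : n → ℂ),
      (X * Matrix.diagonal d * Xᴴ).trace = ∑ a, d a := by
    intro X hX d
    rw [Matrix.trace_mul_cycle, hX, Matrix.one_mul, Matrix.trace_diagonal]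
  have hlamsum : ∑ a, lam a = 1 := by
    have h1 : σ.trace = ((∑ a, lam a : ℝ) : ℂ) := by
      rw [hσspec, htrdiag U hU'U]
      push_cast
      rfl
    rw [hσtr] at h1
    exact_mod_cast h1.symm
  have hmusum : ∑ b, mu b = 1 := by
    have h1 : τ.trace = ((∑ b, mu b : ℝ) : ℂ) := by
      rw [hτspec, htrdiag V hV'V]
      push_cast
      rfl
    rw [hτtr] at h1
    exact_mod_cast h1.symm
  set p : ι → ℝ := fun i => ((σ * E i).trace).re with hpdef
  set q : ι → ℝ := fun i => ((τ * E i).trace).re with hqdef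
  have hptr : ∀ i, (σ * E i).trace = ((p i : ℝ) : ℂ) :=
    fun i => (trace_psd_proj hσP (hEh i) (hEp i)).1
  have hqtr : ∀ i, (τ * E i).trace = ((q i : ℝ) : ℂ) :=
    fun i => (trace_psd_proj hτP (hEh i) (hEp i)).1
  have hp0 : ∀ i, 0 ≤ p i := fun i => (trace_psd_proj hσP (hEh i) (hEp i)).2.1
  have hq0 : ∀ i, 0 ≤ q i := fun i => (trace_psd_proj hτP (hEh i) (hEp i)).2.1
  have hqp : ∀ i, q i = 0 → p i = 0 := by
    intro i h
    have hτE : τ * E i = 0 := (trace_psd_proj hτP (hEh i) (hEp i)).2.2 h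
    have hσE : σ * E i = 0 := by
      have hv : ∀ v, (σ * E i).mulVec v = 0 := by
        intro v
        rw [← Matrix.mulVec_mulVec]
        apply hsupp
        rw [Matrix.mulVec_mulVec, hτE, Matrix.zero_mulVec]
      ext a b
      have := congrFun (hv (Pi.single b 1)) a
      simpa [Matrix.mulVec_single] using this
    show ((σ * E i).trace).re = 0
    rw [hσE]
    simp
  have hpsum : ∑ i, p i = 1 := by
    have h1 : ∑ i, (σ * E i).trace = 1 := by
      rw [← Matrix.trace_sum, ← Finset.mul_sum, hEsum, Matrix.mul_one, hσtr]
    have h2 : ∑ i, p i = (∑ i, (σ * E i).trace).re := (Complex.re_sum _ _).symm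
    rw [h2, h1, Complex.one_re]
  have hqsum : ∑ i, q i = 1 := by
    have h1 : ∑ i, (τ * E i).trace = 1 := by
      rw [← Matrix.trace_sum, ← Finset.mul_sum, hEsum, Matrix.mul_one, hτtr]
    have h2 : ∑ i, q i = (∑ i, (τ * E i).trace).re := (Complex.re_sum _ _).symm
    rw [h2, h1, Complex.one_re]
  -- support fact
  have hsupp1 : ∀ b, mu b = 0 → ∀ a, (lam a : ℂ) * W a b = 0 := by
    intro b hb a
    have hDlW : (lam a : ℂ) * W a b = (Uᴴ * (σ * V)) a b := by
      have h1 : Uᴴ * (σ * V)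
          = Matrix.diagonal (fun a => ((lam a : ℝ) : ℂ)) * W := by
        rw [hσspec, hWdef]
        rw [show Uᴴ * (U * Matrix.diagonal (fun a => ((lam a : ℝ) : ℂ)) * Uᴴ * V)
            = (Uᴴ * U) * (Matrix.diagonal (fun a => ((lam a : ℝ) : ℂ)) * (Uᴴ * V)) by
          simp only [Matrix.mul_assoc], hU'U, Matrix.one_mul]
      rw [h1, Matrix.diagonal_mul]
    have hτV : τ.mulVec (fun x => V x b) = 0 := by
      have h1 : τ * V = V * Matrix.diagonal (fun b => ((mu b : ℝ) : ℂ)) := by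
        rw [hτspec, Matrix.mul_assoc, hV'V, Matrix.mul_one]
      funext x
      have h2 : τ.mulVec (fun y => V y b) x = (τ * V) x b := by
        simp [Matrix.mulVec, Matrix.mul_apply, dotProduct]
      rw [Pi.zero_apply, h2, h1, Matrix.mul_diagonal, hb]
      simp
    have hσV := hsupp _ hτV
    rw [hDlW, Matrix.mul_apply]
    apply Finset.sum_eq_zero
    intro x _
    have h3 : (σ * V) x b = 0 := by
      have h2 : (σ * V) x b = σ.mulVec (fun y => V y b) x := by
        simp [Matrix.mulVec, Matrix.mul_apply, dotProduct]
      rw [h2, hσV, Pi.zero_apply]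
    rw [h3, mul_zero]
  -- matLog values
  have hmatLogσ : matLog σ
      = U * Matrix.diagonal (fun a => ((Real.log (lam a) : ℝ) : ℂ)) * Uᴴ := by
    unfold matLog
    rw [dif_pos hσP.1]
    rw [Matrix.star_eq_conjTranspose]
  have hmatLogτ : matLog τ
      = V * Matrix.diagonal (fun b => ((Real.log (mu b) : ℝ) : ℂ)) * Vᴴ := by
    unfold matLog
    rw [dif_pos hτP.1]
    rw [Matrix.star_eq_conjTranspose]
  set T : n → n → ℝ := fun a b => Complex.normSq (W a b) with hTdef
  have hT0 : ∀ a b, 0 ≤ T a b := fun a b => Complex.normSq_nonneg _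
  -- relEnt value
  have hrel : relEnt σ τ
      = ∑ a, ∑ b, T a b * (lam a * (Real.log (lam a) - Real.log (mu b))) := by
    have e1 : (σ * matLog σ).trace
        = ((∑ a, ∑ b, lam a * Real.log (lam b) * Complex.normSq ((Uᴴ*U) a b) : ℝ) : ℂ) := by
      rw [hmatLogσ]
      conv_lhs => rw [hσspec]
      exact cross_diag_trace U U lam (fun x => Real.log (lam x))
    have e1' : (σ * matLog σ).trace.re = ∑ a, lam a * Real.log (lam a) := by
      rw [e1, Complex.ofReal_re, hU'U]
      apply Finset.sum_congr rfl
      intro a _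
      rw [Finset.sum_eq_single a]
      · rw [Matrix.one_apply_eq]
        simp
      · intro b _ hb
        rw [Matrix.one_apply_ne (Ne.symm hb)]
        simp
      · intro h
        exact absurd (Finset.mem_univ a) h
    have e2 : (σ * matLog τ).trace
        = ((∑ a, ∑ b, lam a * Real.log (mu b) * Complex.normSq ((Uᴴ*V) a b) : ℝ) : ℂ) := by
      rw [hmatLogτ]
      conv_lhs => rw [hσspec]
      exact cross_diag_trace U V lam (fun x => Real.log (mu x))
    have e2' : (σ * matLog τ).trace.re
        = ∑ a, ∑ b, lam a * Real.log (mu b) * T a b := by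
      rw [e2, Complex.ofReal_re]
    have hre : relEnt σ τ = (σ * matLog σ).trace.re - (σ * matLog τ).trace.re := by
      unfold relEnt
      rw [Matrix.mul_sub, Matrix.trace_sub, Complex.sub_re]
    rw [hre, e1', e2']
    have hrw : ∀ a, lam a * Real.log (lam a)
        = ∑ b, T a b * (lam a * Real.log (lam a)) := by
      intro a
      rw [← Finset.sum_mul]
      have : ∑ b, T a b = 1 := hWrow a
      rw [this, one_mul]
    rw [Finset.sum_congr rfl (fun a _ => hrw a), ← Finset.sum_sub_distrib]
    apply Finset.sum_congr rfl
    intro a _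
    rw [← Finset.sum_sub_distrib]
    apply Finset.sum_congr rfl
    intro b _
    ring
  -- pointwise inequality
  have hpoint : ∀ t : ℝ, 0 < t →
      ∑ i, (p i * (p i - q i))/(p i + t*q i)
        ≤ ∑ a, ∑ b, T a b * ((lam a * (lam a - mu b))/(lam a + t*mu b)) := by
    intro t ht
    set ci : ι → ℝ := fun i => q i / (p i + t * q i) with hci
    set Yt : Matrix n n ℂ := ∑ i, ((ci i : ℝ) : ℂ) • E i with hYt
    set At : Matrix n n ℂ := Uᴴ * (Yt * V) with hAt
    have hYh : Ytᴴ = Yt := projSum_herm E hEh ci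
    have hYsq : Yt * Yt = ∑ i, ((ci i : ℂ) * (ci i : ℂ)) • E i := projSum_sq E hEp hEo ci
    -- h1
    have htr1 : (τ * Yt).trace = ((∑ i, ci i * q i : ℝ) : ℂ) := by
      rw [traceSum τ E (fun i => ((ci i : ℝ) : ℂ))]
      push_cast
      apply Finset.sum_congr rfl
      intro i _
      rw [hqtr i]
    have htr1' : (τ * Yt).trace
        = ∑ b, ∑ a, (mu b : ℂ) * ((starRingEnd ℂ) (W a b) * (At a b)) := by
      conv_lhs => rw [hτspec]
      exact aggE1 hUU mu
    have hh1 : ∑ a, ∑ b, mu b * (((starRingEnd ℂ) (W a b)) * (At a b)).re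
        = ∑ i, ci i * q i := by
      have heq := congrArg Complex.re (htr1'.symm.trans htr1)
      simp only [Complex.re_sum, Complex.re_ofReal_mul, Complex.ofReal_re] at heq
      rw [Finset.sum_comm]
      exact heq
    -- h2
    have htr2 : (σ * (Yt * Ytᴴ)).trace = ((∑ i, (ci i)^2 * p i : ℝ) : ℂ) := by
      rw [hYh, hYsq, traceSum σ E (fun i => (ci i : ℂ) * (ci i : ℂ))]
      push_cast
      apply Finset.sum_congr rfl
      intro i _
      rw [hptr i]
      push_cast
      ring
    have htr2' : (σ * (Yt * Ytᴴ)).trace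
        = ∑ a, ∑ b, (lam a : ℂ) * ((Complex.normSq (At a b) : ℝ) : ℂ) := by
      conv_lhs => rw [hσspec]
      exact aggE2 hVV lam
    have hh2 : ∑ a, ∑ b, lam a * Complex.normSq (At a b) = ∑ i, (ci i)^2 * p i := by
      have heq := congrArg Complex.re (htr2'.symm.trans htr2)
      simp only [Complex.re_sum, Complex.re_ofReal_mul, Complex.ofReal_re] at heq
      exact heq
    -- h3
    have htr3 : (τ * (Ytᴴ * Yt)).trace = ((∑ i, (ci i)^2 * q i : ℝ) : ℂ) := by
      rw [hYh, hYsq, traceSum τ E (fun i => (ci i : ℂ) * (ci i : ℂ))]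
      push_cast
      apply Finset.sum_congr rfl
      intro i _
      rw [hqtr i]
      push_cast
      ring
    have htr3' : (τ * (Ytᴴ * Yt)).trace
        = ∑ b, ∑ a, (mu b : ℂ) * ((Complex.normSq (At a b) : ℝ) : ℂ) := by
      conv_lhs => rw [hτspec]
      exact aggE3 hUU mu
    have hh3 : ∑ a, ∑ b, mu b * Complex.normSq (At a b) = ∑ i, (ci i)^2 * q i := by
      have heq := congrArg Complex.re (htr3'.symm.trans htr3)
      simp only [Complex.re_sum, Complex.re_ofReal_mul, Complex.ofReal_re] at heq
      rw [Finset.sum_comm]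
      exact heq
    have hsum1 : ∑ k : n × n, T k.1 k.2 * lam k.1 = 1 := by
      rw [Fintype.sum_prod_type]
      have : ∀ a, ∑ b, T a b * lam a = lam a := by
        intro a
        rw [← Finset.sum_mul, hWrow a, one_mul]
      rw [Finset.sum_congr rfl (fun a _ => this a), hlamsum]
    have hsum2 : ∑ k : n × n, T k.1 k.2 * mu k.2 = 1 := by
      rw [Fintype.sum_prod_type, Finset.sum_comm]
      have : ∀ b, ∑ a, T a b * mu b = mu b := by
        intro b
        rw [← Finset.sum_mul, hWcol b, one_mul]
      rw [Finset.sum_congr rfl (fun b _ => this b), hmusum]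
    have key := crux (K := n × n) (I := ι) (fun k => T k.1 k.2) (fun k => lam k.1)
      (fun k => mu k.2) p q t ht (fun k => hT0 _ _) (fun k => hlam0 _) (fun k => hmu0 _)
      hp0 hq0 hsum1 hsum2 hpsum hqsum (fun k => W k.1 k.2) (fun k => At k.1 k.2)
      (fun k => rfl)
      (by rw [Fintype.sum_prod_type]; exact hh1)
      (by rw [Fintype.sum_prod_type]; exact hh2)
      (by rw [Fintype.sum_prod_type]; exact hh3)
    rw [Fintype.sum_prod_type] at key
    exact key
  -- integral representation & conclusion
  set f : (n × n) → ℝ → ℝ := fun k t =>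
    T k.1 k.2 * ((lam k.1*(lam k.1 - mu k.2))/((1+t)*(lam k.1 + t*mu k.2))) with hf
  set g : ι → ℝ → ℝ := fun i t =>
    p i*(p i - q i)/((1+t)*(p i + t*q i)) with hg
  have hdeg : ∀ k : n × n, mu k.2 = 0 → T k.1 k.2 * lam k.1 = 0 := by
    intro k hb
    rcases mul_eq_zero.mp (hsupp1 k.2 hb k.1) with h | h
    · have h' : lam k.1 = 0 := by exact_mod_cast h
      rw [h', mul_zero]
    · have h' : T k.1 k.2 = 0 := by
        show Complex.normSq (W k.1 k.2) = 0
        rw [h]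
        simp
      rw [h', zero_mul]
  have hfint : ∀ k : n × n, MeasureTheory.IntegrableOn (f k) (Set.Ioi 0) ∧
      ∫ t in Set.Ioi (0:ℝ), f k t
        = T k.1 k.2 * (lam k.1 * (Real.log (lam k.1) - Real.log (mu k.2))) :=
    fun k => key_int' (hlam0 k.1) (hmu0 k.2) (hdeg k)
  have hgint : ∀ i, MeasureTheory.IntegrableOn (g i) (Set.Ioi 0) ∧
      ∫ t in Set.Ioi (0:ℝ), g i t = p i * (Real.log (p i) - Real.log (q i)) := by
    intro i
    have h := key_int' (T := 1) (hp0 i) (hq0 i) (fun h0 => by rw [hqp i h0]; ring)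
    simp only [one_mul] at h
    exact h
  have hrelint : relEnt σ τ = ∫ t in Set.Ioi (0:ℝ), ∑ k : n × n, f k t := by
    have hprod : (∑ k : n × n,
        T k.1 k.2 * (lam k.1 * (Real.log (lam k.1) - Real.log (mu k.2))))
        = ∑ a, ∑ b, T a b * (lam a * (Real.log (lam a) - Real.log (mu b))) := by
      rw [Fintype.sum_prod_type]
    rw [MeasureTheory.integral_finset_sum _ (fun k _ => (hfint k).1),
      Finset.sum_congr rfl (fun k (_ : k ∈ Finset.univ) => (hfint k).2), hprod, hrel]
  have hRHSint : (∑ i, p i * (Real.log (p i) - Real.log (q i)))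
      = ∫ t in Set.Ioi (0:ℝ), ∑ i, g i t := by
    rw [MeasureTheory.integral_finset_sum _ (fun i _ => (hgint i).1),
      Finset.sum_congr rfl (fun i (_ : i ∈ Finset.univ) => (hgint i).2)]
  have hbound : ∀ t ∈ Set.Ioi (0:ℝ), ∑ i, g i t ≤ ∑ k : n × n, f k t := by
    intro t ht'
    have ht : (0:ℝ) < t := ht'
    have hsplit : ∀ (Tv a d : ℝ), Tv * (a/((1+t)*d)) = (1+t)⁻¹ * (Tv * (a/d)) := by
      intro Tv a d
      rw [show a/((1+t)*d) = (1+t)⁻¹ * (a/d) by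
        rw [inv_mul_eq_div, div_div, mul_comm d (1+t)]]
      ring
    have hgs : ∑ i, g i t
        = (1+t)⁻¹ * ∑ i, (p i * (p i - q i))/(p i + t*q i) := by
      rw [Finset.mul_sum]
      apply Finset.sum_congr rfl
      intro i _
      have := hsplit 1 (p i * (p i - q i)) (p i + t*q i)
      simpa using this
    have hfs : ∑ k : n × n, f k t
        = (1+t)⁻¹ * ∑ k : n × n,
            T k.1 k.2 * ((lam k.1 * (lam k.1 - mu k.2))/(lam k.1 + t*mu k.2)) := by
      rw [Finset.mul_sum]
      apply Finset.sum_congr rfl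
      intro k _
      exact hsplit _ _ _
    rw [hgs, hfs]
    apply mul_le_mul_of_nonneg_left _ (by positivity)
    rw [Fintype.sum_prod_type]
    exact hpoint t ht
  rw [ge_iff_le, hRHSint, hrelint]
  apply MeasureTheory.setIntegral_mono_on
  · exact MeasureTheory.integrable_finset_sum _ (fun i _ => (hgint i).1)
  · exact MeasureTheory.integrable_finset_sum _ (fun k _ => (hfint k).1)
  · exact measurableSet_Ioi
  · exact hbound
end
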